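/- arXiv:2107.04103 — 7 statements merged into one kernel-verified Lean document; each statement's English description precedes it below -/
import Mathlib

section
/- Let k ≥ 1, let X_1, …, X_k be independent random variables with X_i ~ Bernoulli(p_i), and let a_1, …, a_k ≥ 0 be real weights with max_i a_i > 0. If x > 0 satisfies ∑_{i=1}^k a_i p_i ≤ x, then P(∑_{i=1}^k a_i X_i > 3x) ≤ exp(−x / max_i a_i). -/
open MeasureTheory ProbabilityTheory

lemma bern_mgf_le {Ω : Type*} [MeasurableSpace Ω] (μ : Measure Ω) [IsProbabilityMeasure μ]
    (X : Ω → ℝ) (hX : Measurable X) (hval : ∀ᵐ ω ∂μ, X ω = 0 ∨ X ω = 1)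
    (p : ℝ) (hp : p ∈ Set.Icc (0:ℝ) 1) (hX1 : μ {ω | X ω = 1} = ENNReal.ofReal p)
    (c : ℝ) (hc0 : 0 ≤ c) (hc1 : c ≤ 1) :
    ∫ ω, Real.exp (c * X ω) ∂μ ≤ Real.exp (2 * c * p) := by
  have hs : MeasurableSet {ω | X ω = 1} := hX (measurableSet_singleton 1)
  have h_ind : X =ᵐ[μ] Set.indicator {ω | X ω = 1} (fun _ => (1:ℝ)) := by
    filter_upwards [hval] with ω hω
    rcases hω with h | h
    · simp [Set.indicator, h, Set.mem_setOf_eq]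
    · simp [Set.indicator, h, Set.mem_setOf_eq]
  have hXint : Integrable X μ := by
    refine (integrable_congr h_ind.symm).mp ?_
    exact (integrable_const (1:ℝ)).indicator hs
  have hEX : ∫ ω, X ω ∂μ = p := by
    rw [integral_congr_ae h_ind, integral_indicator_const _ hs, measureReal_def, hX1]
    simp [ENNReal.toReal_ofReal hp.1]
  have h_eq : (fun ω => Real.exp (c * X ω)) =ᵐ[μ]
      fun ω => 1 + (Real.exp c - 1) * X ω := by
    filter_upwards [hval] with ω hω
    rcases hω with h | h <;> simp [h]
  have : ∫ ω, Real.exp (c * X ω) ∂μ = 1 + (Real.exp c - 1) * p := by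
    rw [integral_congr_ae h_eq, integral_add (integrable_const 1) (hXint.const_mul _),
      integral_const, integral_const_mul, hEX]
    simp
  rw [this]
  have h1 : (Real.exp c - 1) * p ≤ 2 * c * p := by
    have := (abs_le.mp (Real.abs_exp_sub_one_le (x := c) (by rwa [abs_of_nonneg hc0]))).2
    rw [abs_of_nonneg hc0] at this
    nlinarith [hp.1]
  calc 1 + (Real.exp c - 1) * p ≤ Real.exp ((Real.exp c - 1) * p) := by
        linarith [Real.add_one_le_exp ((Real.exp c - 1) * p)]
    _ ≤ Real.exp (2 * c * p) := Real.exp_le_exp.mpr h1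

/-- If `X_1, …, X_k` are independent Bernoulli(`p_i`) random variables,
`a_i ≥ 0` are weights with some `a_i > 0`, and `∑ a_i p_i ≤ x` with `x > 0`, then
`P(∑ a_i X_i > 3x) ≤ exp(−x / max_i a_i)`. -/
theorem stmt0 {Ω : Type*} [MeasurableSpace Ω] (μ : Measure Ω) [IsProbabilityMeasure μ]
    (k : ℕ) (hk : 1 ≤ k) (X : Fin k → Ω → ℝ) (p a : Fin k → ℝ)
    (hmeas : ∀ i, Measurable (X i))
    (hindep : iIndepFun X μ)
    (hp01 : ∀ i, p i ∈ Set.Icc (0 : ℝ) 1)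
    (hval : ∀ i, ∀ᵐ ω ∂μ, X i ω = 0 ∨ X i ω = 1)
    (hX1 : ∀ i, μ {ω | X i ω = 1} = ENNReal.ofReal (p i))
    (ha : ∀ i, 0 ≤ a i) (hapos : ∃ i, 0 < a i)
    (x : ℝ) (hx : 0 < x) (hsum : ∑ i, a i * p i ≤ x) :
    μ {ω | 3 * x < ∑ i, a i * X i ω}
      ≤ ENNReal.ofReal
          (Real.exp (-(x / Finset.univ.sup' (Finset.univ_nonempty_iff.mpr ⟨⟨0, hk⟩⟩) a))) := by
  set M := Finset.univ.sup' (Finset.univ_nonempty_iff.mpr ⟨⟨0, hk⟩⟩) a with hMdef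
  have hMle : ∀ i, a i ≤ M := fun i => Finset.le_sup' a (Finset.mem_univ i)
  obtain ⟨j, hj⟩ := hapos
  have hMpos : 0 < M := lt_of_lt_of_le hj (hMle j)
  set t : ℝ := 1 / M with htdef
  have ht0 : 0 < t := by positivity
  set Y : Fin k → Ω → ℝ := fun i ω => a i * X i ω with hYdef
  have hYmeas : ∀ i, Measurable (Y i) := fun i => (hmeas i).const_mul _
  have hindepY : iIndepFun Y μ :=
    hindep.comp (fun i y => a i * y) (fun i => measurable_const_mul _)
  have hS_eq : ∀ ω, (∑ i, Y i) ω = ∑ i, a i * X i ω := by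
    intro ω; simp [hYdef, Finset.sum_apply]
  have hSmeas : Measurable (∑ i, Y i) := by
    have h : (∑ i, Y i) = fun ω => ∑ i, Y i ω := funext fun ω => Finset.sum_apply ω Finset.univ Y
    rw [h]; exact Finset.measurable_sum _ (fun i _ => hYmeas i)
  -- integrability of exp(t * S)
  have hbdd : ∀ᵐ ω ∂μ, ∀ i, X i ω = 0 ∨ X i ω = 1 := (ae_all_iff).mpr hval
  have hint : Integrable (fun ω => Real.exp (t * (∑ i, Y i) ω)) μ := by
    refine Integrable.mono' (integrable_const (Real.exp (t * ∑ i, a i)))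
      ((hSmeas.const_mul t).exp.aestronglyMeasurable) ?_
    filter_upwards [hbdd] with ω hω
    rw [Real.norm_eq_abs, abs_of_pos (Real.exp_pos _), Real.exp_le_exp]
    have hS : (∑ i, Y i) ω ≤ ∑ i, a i := by
      rw [hS_eq]
      refine Finset.sum_le_sum fun i _ => ?_
      rcases hω i with h | h <;> simp [h, ha i]
    exact mul_le_mul_of_nonneg_left hS ht0.le
  have hchern := measure_ge_le_exp_mul_mgf (X := ∑ i, Y i) (μ := μ) (t := t) (3 * x) ht0.le hint
  have hmgf : mgf (∑ i, Y i) μ t ≤ Real.exp (2 * t * x) := by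
    rw [hindepY.mgf_sum hYmeas]
    calc ∏ i, mgf (Y i) μ t ≤ ∏ i, Real.exp (2 * (t * a i) * p i) := by
          refine Finset.prod_le_prod (fun i _ => mgf_nonneg) (fun i _ => ?_)
          have hrw : mgf (Y i) μ t = ∫ ω, Real.exp ((t * a i) * X i ω) ∂μ := by
            simp only [mgf, hYdef]
            congr 1 with ω
            ring_nf
          rw [hrw]
          refine bern_mgf_le μ (X i) (hmeas i) (hval i) (p i) (hp01 i) (hX1 i) _
            (mul_nonneg ht0.le (ha i)) ?_
          rw [htdef, div_mul_eq_mul_div, one_mul, div_le_one hMpos]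
          exact hMle i
      _ = Real.exp (∑ i, 2 * (t * a i) * p i) := by rw [← Real.exp_sum]
      _ ≤ Real.exp (2 * t * x) := by
          rw [Real.exp_le_exp]
          have h1 : ∑ i, 2 * (t * a i) * p i = 2 * t * ∑ i, a i * p i := by
            rw [Finset.mul_sum]; exact Finset.sum_congr rfl fun i _ => by ring
          rw [h1]
          have : (0:ℝ) ≤ 2 * t := by positivity
          nlinarith
  have hfinal : Real.exp (-t * (3 * x)) * mgf (∑ i, Y i) μ t ≤ Real.exp (-(x / M)) := by
    calc Real.exp (-t * (3 * x)) * mgf (∑ i, Y i) μ t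
        ≤ Real.exp (-t * (3 * x)) * Real.exp (2 * t * x) :=
          mul_le_mul_of_nonneg_left hmgf (Real.exp_pos _).le
      _ = Real.exp (-t * (3 * x) + 2 * t * x) := by rw [← Real.exp_add]
      _ = Real.exp (-(x / M)) := by
          congr 1
          rw [htdef]; field_simp; ring
  calc μ {ω | 3 * x < ∑ i, a i * X i ω}
      ≤ μ {ω | 3 * x ≤ (∑ i, Y i) ω} := by
        refine measure_mono fun ω hω => ?_
        rw [Set.mem_setOf_eq, hS_eq]
        exact le_of_lt hω
    _ = ENNReal.ofReal (μ {ω | 3 * x ≤ (∑ i, Y i) ω}).toReal :=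
        (ENNReal.ofReal_toReal (measure_ne_top _ _)).symm
    _ ≤ ENNReal.ofReal (Real.exp (-(x / M))) :=
        ENNReal.ofReal_le_ofReal (hchern.trans hfinal)
end

section
/- For every λ > 0 and all positive integers i, j, one has p_∞(i,j) ≤ λ_{ij} ≤ λ² h(i,j), where p_∞(i,j) = 1 − e^{−λ_{ij}}; in particular the two-step connection probability p_∞(i,j) is dominated by λ² B_α (min(i,j))^{−(1−α)} (max(i,j))^{−α}. -/
open MeasureTheory Real Filter Set
open scoped ENNReal NNReal

noncomputable section

lemma int_key {α a : ℝ} (hα : 0 < α) (ha : 0 < a) :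
    (∫ x in Set.Ioi (0:ℝ), x ^ (-α) * (1 - Real.exp (-(a * x ^ (-α)))))
      = a ^ (1/α - 1) / α * ∫ z in Set.Ioi (0:ℝ), (1 - Real.exp (-z)) * z ^ (-(1/α)) := by
  have hne : (-α) ≠ 0 := neg_ne_zero.mpr hα.ne'
  set g : ℝ → ℝ := fun z => (1/α) * ((1 - Real.exp (-(a*z))) * z ^ (-(1/α))) with hg
  have step1 : (∫ x in Set.Ioi (0:ℝ), x ^ (-α) * (1 - Real.exp (-(a * x ^ (-α)))))
      = ∫ x in Set.Ioi (0:ℝ), (|(-α)| * x ^ (-α - 1)) • g (x ^ (-α)) := by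
    refine (setIntegral_congr_fun measurableSet_Ioi (fun x hx => ?_)).symm
    have hx0 : (0:ℝ) < x := hx
    have h1 : (x ^ (-α)) ^ (-(1/α)) = x := by
      rw [← Real.rpow_mul hx0.le]
      have : (-α) * (-(1/α)) = 1 := by field_simp
      rw [this, Real.rpow_one]
    have h2 : x ^ (-α - 1) * x = x ^ (-α) := by
      rw [← Real.rpow_add_one hx0.ne']
      norm_num
    simp only [hg, smul_eq_mul, h1, abs_neg, abs_of_pos hα]
    rw [← h2]
    field_simp
  rw [step1, integral_comp_rpow_Ioi g hne]
  have step3 : (∫ z in Set.Ioi (0:ℝ), g z)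
      = (1/α) * ∫ z in Set.Ioi (0:ℝ), (1 - Real.exp (-(a*z))) * z ^ (-(1/α)) := by
    simp only [hg]; exact integral_const_mul _ _
  have step4 : (∫ z in Set.Ioi (0:ℝ), (1 - Real.exp (-(a*z))) * z ^ (-(1/α)))
      = a ^ (1/α) * ∫ z in Set.Ioi (0:ℝ),
          (fun w => (1 - Real.exp (-w)) * w ^ (-(1/α))) (a * z) := by
    rw [← integral_const_mul]
    refine setIntegral_congr_fun measurableSet_Ioi (fun z hz => ?_)
    have hz0 : (0:ℝ) < z := hz
    simp only []
    rw [Real.mul_rpow ha.le hz0.le]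
    have h5 : a ^ (1/α) * a ^ (-(1/α)) = 1 := by
      rw [← Real.rpow_add ha]; norm_num
    linear_combination (-((1 - Real.exp (-(a*z))) * z ^ (-(1/α)))) * h5
  rw [step3, step4, integral_comp_mul_left_Ioi (fun w => (1 - Real.exp (-w)) * w ^ (-(1/α))) 0 ha]
  simp only [mul_zero, smul_eq_mul]
  have : a ^ (1/α - 1) = a ^ (1/α) * a⁻¹ := by
    rw [Real.rpow_sub ha, Real.rpow_one, div_eq_mul_inv]
  rw [this]; ring

lemma int_integrable {α a : ℝ} (hα1 : 1/2 < α) (hα2 : α < 1) (ha : 0 < a) :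
    IntegrableOn (fun x => x ^ (-α) * (1 - Real.exp (-(a * x ^ (-α))))) (Set.Ioi (0:ℝ)) := by
  have hα0 : (0:ℝ) < α := by linarith
  have hm : Measurable (fun x : ℝ => x ^ (-α) * (1 - Real.exp (-(a * x ^ (-α))))) := by
    fun_prop
  have h01 : IntegrableOn (fun x => x ^ (-α) * (1 - Real.exp (-(a * x ^ (-α)))))
      (Set.Ioc (0:ℝ) 1) := by
    refine Integrable.mono' (g := fun x : ℝ => x ^ (-α))
      ((intervalIntegral.intervalIntegrable_rpow' (by linarith : (-1:ℝ) < -α)).1)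
      hm.aestronglyMeasurable.restrict ?_
    filter_upwards [ae_restrict_mem measurableSet_Ioc] with x hx
    have hx0 : (0:ℝ) < x := hx.1
    have hu : 0 ≤ a * x ^ (-α) := by positivity
    have he1 : Real.exp (-(a * x ^ (-α))) ≤ 1 := Real.exp_le_one_iff.mpr (by linarith)
    have he0 : 0 < Real.exp (-(a * x ^ (-α))) := Real.exp_pos _
    rw [Real.norm_eq_abs, abs_mul, abs_of_nonneg (Real.rpow_nonneg hx0.le _)]
    have : |1 - Real.exp (-(a * x ^ (-α)))| ≤ 1 := by
      rw [abs_le]; constructor <;> linarith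
    calc x ^ (-α) * |1 - Real.exp (-(a * x ^ (-α)))| ≤ x ^ (-α) * 1 := by
          exact mul_le_mul_of_nonneg_left this (Real.rpow_nonneg hx0.le _)
      _ = x ^ (-α) := mul_one _
  have h1i : IntegrableOn (fun x => x ^ (-α) * (1 - Real.exp (-(a * x ^ (-α)))))
      (Set.Ioi (1:ℝ)) := by
    refine Integrable.mono' (g := fun x : ℝ => a * x ^ (-(2*α)))
      ((integrableOn_Ioi_rpow_of_lt (by linarith : -(2*α) < -1) one_pos).const_mul a)
      hm.aestronglyMeasurable.restrict ?_
    filter_upwards [ae_restrict_mem measurableSet_Ioi] with x hx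
    have hx0 : (0:ℝ) < x := lt_trans one_pos hx
    have hu : 0 ≤ a * x ^ (-α) := by positivity
    have he1 : Real.exp (-(a * x ^ (-α))) ≤ 1 := Real.exp_le_one_iff.mpr (by linarith)
    have hle : 1 - Real.exp (-(a * x ^ (-α))) ≤ a * x ^ (-α) := by
      have := Real.add_one_le_exp (-(a * x ^ (-α)))
      linarith
    have hxx : x ^ (-α) * x ^ (-α) = x ^ (-(2*α)) := by
      rw [← Real.rpow_add hx0]; congr 1; ring
    rw [Real.norm_eq_abs, abs_mul, abs_of_nonneg (Real.rpow_nonneg hx0.le _),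
      abs_of_nonneg (by linarith : (0:ℝ) ≤ 1 - Real.exp (-(a * x ^ (-α))))]
    calc x ^ (-α) * (1 - Real.exp (-(a * x ^ (-α)))) ≤ x ^ (-α) * (a * x ^ (-α)) :=
          mul_le_mul_of_nonneg_left hle (Real.rpow_nonneg hx0.le _)
      _ = a * (x ^ (-α) * x ^ (-α)) := by ring
      _ = a * x ^ (-(2*α)) := by rw [hxx]
  have := h01.union h1i
  rwa [Set.Ioc_union_Ioi_eq_Ioi zero_le_one] at this

/-- `α = 1/(τ−1)`. -/
def alphaOf (τ : ℝ) : ℝ := 1 / (τ - 1)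

/-- `μ = c_F/(1−α)`. -/
def muOf (τ cF : ℝ) : ℝ := cF / (1 - alphaOf τ)

/-- `A_α = ∫_0^∞ (1 − e^{−z}) z^{−1/α} dz`. -/
def AalphaOf (τ : ℝ) : ℝ :=
  ∫ z in Set.Ioi (0 : ℝ), (1 - Real.exp (-z)) * z ^ (-(1 / alphaOf τ))

/-- `B_α = c_F^{2/α} A_α/(α μ^{1/α})`. -/
def BalphaOf (τ cF : ℝ) : ℝ :=
  cF ^ (2 / alphaOf τ) * AalphaOf τ / (alphaOf τ * muOf τ cF ^ (1 / alphaOf τ))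

/-- `λ_c = √(η/(4B_α))` with `η = 2α−1`. -/
def lambdaC (τ cF : ℝ) : ℝ :=
  Real.sqrt ((2 * alphaOf τ - 1) / (4 * BalphaOf τ cF))

/-- `h(x,y) = B_α (min x y)^{−(1−α)} (max x y)^{−α}`. -/
def hOf (τ cF : ℝ) (x y : ℝ) : ℝ :=
  BalphaOf τ cF * (min x y) ^ (-(1 - alphaOf τ)) * (max x y) ^ (-alphaOf τ)

/-- `θ_i = c_F i^{−α}/μ`. -/
def thetaOf (τ cF : ℝ) (i : ℕ) : ℝ := cF * (i : ℝ) ^ (-alphaOf τ) / muOf τ cF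

/-- `Θ_i(x) = 1 − exp(−c_F θ_i x^{−α})`. -/
def ThetaOf (τ cF : ℝ) (i : ℕ) (x : ℝ) : ℝ :=
  1 - Real.exp (-(cF * thetaOf τ cF i * x ^ (-alphaOf τ)))

/-- `λ_{ij} = λ² ∫_0^∞ Θ_i(x) Θ_j(x) dx`. -/
def lamIJ (τ cF lam : ℝ) (i j : ℕ) : ℝ :=
  lam ^ 2 * ∫ x in Set.Ioi (0 : ℝ), ThetaOf τ cF i x * ThetaOf τ cF j x


lemma mainbound (τ cF : ℝ) (hτ : τ ∈ Set.Ioo (2:ℝ) 3) (hcF : 0 < cF)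
    (k l : ℕ) (hk : 1 ≤ k) (hl : 1 ≤ l) :
    (∫ x in Set.Ioi (0:ℝ), ThetaOf τ cF k x * ThetaOf τ cF l x)
      ≤ BalphaOf τ cF * (l:ℝ) ^ (-(1 - alphaOf τ)) * (k:ℝ) ^ (-alphaOf τ) := by
  set α := alphaOf τ with hαdef
  have hτ1 : (1:ℝ) < τ - 1 := by linarith [hτ.1]
  have hτ2 : τ - 1 < 2 := by linarith [hτ.2]
  have hα2 : α < 1 := by
    rw [hαdef, alphaOf]; rw [div_lt_one (by linarith)]; linarith
  have hα1 : 1/2 < α := by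
    rw [hαdef, alphaOf]
    rw [div_lt_div_iff₀ (by norm_num) (by linarith)]; linarith
  have hα0 : (0:ℝ) < α := by linarith
  have h1α : (0:ℝ) < 1 - α := by linarith
  have hμ : 0 < muOf τ cF := by
    rw [muOf, ← hαdef]; positivity
  have hk0 : (0:ℝ) < (k:ℝ) := by exact_mod_cast hk
  have hl0 : (0:ℝ) < (l:ℝ) := by exact_mod_cast hl
  set c : ℝ := cF^2 / muOf τ cF with hcdef
  have hc : 0 < c := by positivity
  have hak : cF * thetaOf τ cF k = c * (k:ℝ) ^ (-α) := by
    rw [thetaOf, hcdef]; field_simp; ring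
  have hal : cF * thetaOf τ cF l = c * (l:ℝ) ^ (-α) := by
    rw [thetaOf, hcdef]; field_simp; ring
  have hakpos : 0 < c * (k:ℝ) ^ (-α) := by positivity
  have halpos : 0 < c * (l:ℝ) ^ (-α) := by positivity
  simp only [ThetaOf, hak, hal]
  have step1 : (∫ x in Set.Ioi (0:ℝ),
        (1 - Real.exp (-(c * (k:ℝ) ^ (-α) * x ^ (-α)))) *
        (1 - Real.exp (-(c * (l:ℝ) ^ (-α) * x ^ (-α)))))
      ≤ ∫ x in Set.Ioi (0:ℝ),
        (c * (k:ℝ) ^ (-α)) * (x ^ (-α) * (1 - Real.exp (-(c * (l:ℝ) ^ (-α) * x ^ (-α))))) := by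
    refine integral_mono_of_nonneg ?_ ((int_integrable hα1 hα2 halpos).const_mul _) ?_
    · filter_upwards [ae_restrict_mem measurableSet_Ioi] with x hx
      have hx0 : (0:ℝ) < x := hx
      have h1 : Real.exp (-(c * (k:ℝ) ^ (-α) * x ^ (-α))) ≤ 1 :=
        Real.exp_le_one_iff.mpr (neg_nonpos.mpr (by positivity))
      have h2 : Real.exp (-(c * (l:ℝ) ^ (-α) * x ^ (-α))) ≤ 1 :=
        Real.exp_le_one_iff.mpr (neg_nonpos.mpr (by positivity))
      exact mul_nonneg (by linarith) (by linarith)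
    · filter_upwards [ae_restrict_mem measurableSet_Ioi] with x hx
      have hx0 : (0:ℝ) < x := hx
      have h2 : Real.exp (-(c * (l:ℝ) ^ (-α) * x ^ (-α))) ≤ 1 :=
        Real.exp_le_one_iff.mpr (neg_nonpos.mpr (by positivity))
      have hlin : 1 - Real.exp (-(c * (k:ℝ) ^ (-α) * x ^ (-α)))
          ≤ c * (k:ℝ) ^ (-α) * x ^ (-α) := by
        have := Real.add_one_le_exp (-(c * (k:ℝ) ^ (-α) * x ^ (-α)))
        linarith
      calc (1 - Real.exp (-(c * (k:ℝ) ^ (-α) * x ^ (-α)))) *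
            (1 - Real.exp (-(c * (l:ℝ) ^ (-α) * x ^ (-α))))
          ≤ (c * (k:ℝ) ^ (-α) * x ^ (-α)) *
            (1 - Real.exp (-(c * (l:ℝ) ^ (-α) * x ^ (-α)))) :=
            mul_le_mul_of_nonneg_right hlin (by linarith)
        _ = (c * (k:ℝ) ^ (-α)) *
            (x ^ (-α) * (1 - Real.exp (-(c * (l:ℝ) ^ (-α) * x ^ (-α))))) := by ring
  refine le_trans step1 ?_
  rw [integral_const_mul, int_key hα0 halpos]
  -- algebra
  have hAl : (c * (l:ℝ) ^ (-α)) ^ (1/α - 1) = c ^ (1/α - 1) * (l:ℝ) ^ (-(1-α)) := by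
    rw [Real.mul_rpow hc.le (Real.rpow_nonneg hl0.le _), ← Real.rpow_mul hl0.le]
    rw [show (-α) * (1/α - 1) = -(1-α) by field_simp]
  have hrel : c * c ^ (1/α - 1) * muOf τ cF ^ (1/α) = cF ^ (2/α) := by
    have h6 : c * c ^ (1/α - 1) = c ^ (1/α) := by
      rw [Real.rpow_sub hc, Real.rpow_one]
      field_simp
    have h7 : c ^ (1/α) = cF ^ (2/α) / muOf τ cF ^ (1/α) := by
      rw [hcdef, Real.div_rpow (by positivity) hμ.le]
      congr 1
      rw [← Real.rpow_natCast cF 2, ← Real.rpow_mul hcF.le]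
      push_cast
      ring_nf
    rw [h6, h7]
    field_simp
  rw [hAl, BalphaOf, ← hαdef]
  have hM : (0:ℝ) < muOf τ cF ^ (1/α) := Real.rpow_pos_of_pos hμ _
  set A := AalphaOf τ with hAdef
  have hAeq : A = ∫ z in Set.Ioi (0:ℝ), (1 - Real.exp (-z)) * z ^ (-(1/α)) := by
    rw [hAdef, AalphaOf, ← hαdef]
  rw [← hAeq]
  have hMne : muOf τ cF ^ (1/α) ≠ 0 := hM.ne'
  set c1 := c ^ (1/α - 1) with hc1
  set M := muOf τ cF ^ (1/α) with hMdef
  set P := cF ^ (2/α) with hPdef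
  set kk := (k:ℝ) ^ (-α) with hkk
  set ll := (l:ℝ) ^ (-(1-α)) with hll
  apply le_of_eq
  have hrel' : cF^2 / muOf τ cF * c1 * M = P := by rw [← hcdef]; exact hrel
  field_simp
  linear_combination (kk * ll * A) * hrel'

/-- For every `λ > 0` and positive integers `i, j`:
`p_∞(i,j) = 1 − e^{−λ_{ij}} ≤ λ_{ij} ≤ λ² h(i,j)`. -/
theorem stmt4 (τ cF lam : ℝ) (hτ : τ ∈ Set.Ioo (2 : ℝ) 3) (hcF : 0 < cF) (hlam : 0 < lam)
    (i j : ℕ) (hi : 1 ≤ i) (hj : 1 ≤ j) :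
    1 - Real.exp (-(lamIJ τ cF lam i j)) ≤ lamIJ τ cF lam i j
    ∧ lamIJ τ cF lam i j ≤ lam ^ 2 * hOf τ cF (i : ℝ) (j : ℝ) := by
  constructor
  · linarith [Real.add_one_le_exp (-(lamIJ τ cF lam i j))]
  · rw [lamIJ, hOf]
    rcases le_total i j with h | h
    · have hc : ((i:ℝ)) ≤ (j:ℝ) := by exact_mod_cast h
      rw [min_eq_left hc, max_eq_right hc]
      refine mul_le_mul_of_nonneg_left ?_ (sq_nonneg lam)
      have hcomm : ∀ x : ℝ, ThetaOf τ cF i x * ThetaOf τ cF j x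
          = ThetaOf τ cF j x * ThetaOf τ cF i x := fun x => mul_comm _ _
      simp_rw [hcomm]
      exact mainbound τ cF hτ hcF j i hj hi
    · have hc : ((j:ℝ)) ≤ (i:ℝ) := by exact_mod_cast h
      rw [min_eq_right hc, max_eq_left hc]
      refine mul_le_mul_of_nonneg_left ?_ (sq_nonneg lam)
      exact mainbound τ cF hτ hcF i j hi hj
end
end

section
/- With p_∞(i,j) = 1 − e^{−λ_{ij}}, the iterated limit lim_{i→∞} lim_{j→∞} p_∞(i,j)/(λ² h(i,j)) = 1 holds: for each fixed i the inner limit over j exists, and the resulting values converge to 1 as i → ∞. -/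
open MeasureTheory Real Filter
open scoped ENNReal NNReal

noncomputable section

namespace Stmt5Aux
open Set






variable {α : ℝ}

lemma one_sub_exp_nonneg {t : ℝ} (ht : 0 ≤ t) : 0 ≤ 1 - Real.exp (-t) := by
  have h := Real.exp_le_one_iff.mpr (neg_nonpos.mpr ht); linarith

lemma one_sub_exp_le (t : ℝ) : 1 - Real.exp (-t) ≤ t := by
  have h := Real.add_one_le_exp (-t); linarith

lemma one_sub_exp_le_one (t : ℝ) : 1 - Real.exp (-t) ≤ 1 := by
  have h := Real.exp_nonneg (-t); linarith

lemma contOn_rpow (p : ℝ) : ContinuousOn (fun x : ℝ => x ^ p) (Set.Ioi 0) :=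
  fun x hx => (Real.continuousAt_rpow_const x p (Or.inl (ne_of_gt hx))).continuousWithinAt

lemma contOn_theta (k p : ℝ) :
    ContinuousOn (fun x : ℝ => 1 - Real.exp (-(k * x ^ p))) (Set.Ioi 0) :=
  continuousOn_const.sub
    (Real.continuous_exp.comp_continuousOn ((continuousOn_const.mul (contOn_rpow p)).neg))

/-- Integrability of the dominating function. -/
lemma integrable_bound (hα1 : 1/2 < α) (hα2 : α < 1) {a : ℝ} (ha : 0 ≤ a) :
    IntegrableOn (fun x => (1 - Real.exp (-(a * x ^ (-α)))) * x ^ (-α)) (Set.Ioi (0:ℝ)) := by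
  have hα0 : 0 < α := by linarith
  have hcont : ContinuousOn (fun x : ℝ => (1 - Real.exp (-(a * x ^ (-α)))) * x ^ (-α))
      (Set.Ioi 0) := (contOn_theta a (-α)).mul (contOn_rpow (-α))
  rw [← Set.Ioo_union_Ici_eq_Ioi (zero_lt_one (α := ℝ))]
  apply IntegrableOn.union
  · apply Integrable.mono'
      ((intervalIntegral.integrableOn_Ioo_rpow_iff zero_lt_one).mpr (show (-1:ℝ) < -α by linarith))
    · exact (hcont.mono Set.Ioo_subset_Ioi_self).aestronglyMeasurable measurableSet_Ioo
    · filter_upwards [ae_restrict_mem measurableSet_Ioo] with x hx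
      have hx0 : (0:ℝ) < x := hx.1
      have h1 : 0 ≤ x ^ (-α) := Real.rpow_nonneg hx0.le _
      have h2 : 0 ≤ a * x ^ (-α) := mul_nonneg ha h1
      rw [Real.norm_eq_abs, abs_of_nonneg (mul_nonneg (one_sub_exp_nonneg h2) h1)]
      calc (1 - Real.exp (-(a * x ^ (-α)))) * x ^ (-α)
          ≤ 1 * x ^ (-α) := mul_le_mul_of_nonneg_right (one_sub_exp_le_one _) h1
        _ = x ^ (-α) := one_mul _
  · rw [integrableOn_Ici_iff_integrableOn_Ioi]
    apply Integrable.mono'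
      (((integrableOn_Ioi_rpow_iff zero_lt_one).mpr
        (show -α + -α < -1 by linarith)).const_mul a)
    · exact (hcont.mono fun x (hx : x ∈ Set.Ioi (1:ℝ)) => (lt_trans zero_lt_one hx : (0:ℝ) < x)).aestronglyMeasurable
        measurableSet_Ioi
    · filter_upwards [ae_restrict_mem measurableSet_Ioi] with x hx
      have hx0 : (0:ℝ) < x := lt_trans zero_lt_one hx
      have h1 : 0 ≤ x ^ (-α) := Real.rpow_nonneg hx0.le _
      have h2 : 0 ≤ a * x ^ (-α) := mul_nonneg ha h1
      rw [Real.norm_eq_abs, abs_of_nonneg (mul_nonneg (one_sub_exp_nonneg h2) h1)]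
      calc (1 - Real.exp (-(a * x ^ (-α)))) * x ^ (-α)
          ≤ a * x ^ (-α) * x ^ (-α) := mul_le_mul_of_nonneg_right (one_sub_exp_le _) h1
        _ = a * x ^ (-α + -α) := by rw [mul_assoc, ← Real.rpow_add hx0]

/-- Integrability of the `A_α` integrand. -/
lemma A_integrable (hα1 : 1/2 < α) (hα2 : α < 1) :
    IntegrableOn (fun z => (1 - Real.exp (-z)) * z ^ (-(1/α))) (Set.Ioi (0:ℝ)) := by
  have hα0 : 0 < α := by linarith
  have hp1 : 1 < 1/α := by rw [lt_div_iff₀ hα0]; linarith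
  have hp2 : 1/α < 2 := by rw [div_lt_iff₀ hα0]; linarith
  have hcont : ContinuousOn (fun z : ℝ => (1 - Real.exp (-z)) * z ^ (-(1/α)))
      (Set.Ioi 0) := by
    have h := (contOn_theta 1 1).mul (contOn_rpow (-(1/α)))
    apply h.congr
    intro z _
    simp [Real.rpow_one]
  rw [← Set.Ioo_union_Ici_eq_Ioi (zero_lt_one (α := ℝ))]
  apply IntegrableOn.union
  · apply Integrable.mono'
      ((intervalIntegral.integrableOn_Ioo_rpow_iff zero_lt_one).mpr (show (-1:ℝ) < 1 + -(1/α) by linarith))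
    · exact (hcont.mono Set.Ioo_subset_Ioi_self).aestronglyMeasurable measurableSet_Ioo
    · filter_upwards [ae_restrict_mem measurableSet_Ioo] with z hz
      have hz0 : (0:ℝ) < z := hz.1
      have h1 : 0 ≤ z ^ (-(1/α)) := Real.rpow_nonneg hz0.le _
      rw [Real.norm_eq_abs, abs_of_nonneg (mul_nonneg (one_sub_exp_nonneg hz0.le) h1)]
      calc (1 - Real.exp (-z)) * z ^ (-(1/α))
          ≤ z * z ^ (-(1/α)) := mul_le_mul_of_nonneg_right (one_sub_exp_le _) h1
        _ = z ^ (1 + -(1/α)) := by rw [Real.rpow_add hz0, Real.rpow_one]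
  · rw [integrableOn_Ici_iff_integrableOn_Ioi]
    apply Integrable.mono'
      ((integrableOn_Ioi_rpow_iff zero_lt_one).mpr (show -(1/α) < -1 by linarith))
    · exact (hcont.mono fun z (hz : z ∈ Set.Ioi (1:ℝ)) => (lt_trans zero_lt_one hz : (0:ℝ) < z)).aestronglyMeasurable
        measurableSet_Ioi
    · filter_upwards [ae_restrict_mem measurableSet_Ioi] with z hz
      have hz0 : (0:ℝ) < z := lt_trans zero_lt_one hz
      have h1 : 0 ≤ z ^ (-(1/α)) := Real.rpow_nonneg hz0.le _
      rw [Real.norm_eq_abs, abs_of_nonneg (mul_nonneg (one_sub_exp_nonneg hz0.le) h1)]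
      calc (1 - Real.exp (-z)) * z ^ (-(1/α))
          ≤ 1 * z ^ (-(1/α)) := mul_le_mul_of_nonneg_right (one_sub_exp_le_one _) h1
        _ = z ^ (-(1/α)) := one_mul _

lemma A_pos (hα1 : 1/2 < α) (hα2 : α < 1) :
    0 < ∫ z in Set.Ioi (0:ℝ), (1 - Real.exp (-z)) * z ^ (-(1/α)) := by
  have hint := A_integrable hα1 hα2
  have hnn : 0 ≤ᵐ[volume.restrict (Set.Ioi (0:ℝ))]
      fun z => (1 - Real.exp (-z)) * z ^ (-(1/α)) := by
    filter_upwards [ae_restrict_mem measurableSet_Ioi] with z hz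
    exact mul_nonneg (one_sub_exp_nonneg (le_of_lt hz)) (Real.rpow_nonneg (le_of_lt hz) _)
  rw [setIntegral_pos_iff_support_of_nonneg_ae hnn hint]
  have hsub : Set.Ioi (0:ℝ) ⊆ Function.support (fun z => (1 - Real.exp (-z)) * z ^ (-(1/α)))
      ∩ Set.Ioi 0 := by
    intro z hz
    refine ⟨?_, hz⟩
    have h1 : Real.exp (-z) < 1 := Real.exp_lt_one_iff.mpr (by simpa using hz)
    have h2 : (0:ℝ) < z ^ (-(1/α)) := Real.rpow_pos_of_pos hz _
    exact ne_of_gt (mul_pos (by linarith) h2)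
  calc (0:ENNReal) < volume (Set.Ioi (0:ℝ)) := by rw [Real.volume_Ioi]; exact ENNReal.zero_lt_top
    _ ≤ _ := measure_mono hsub






variable {α : ℝ}

/-- Change of variables `z = c x^{-α}`. -/
lemma change_var (hα1 : 1/2 < α) (hα2 : α < 1) {c : ℝ} (hc : 0 < c) :
    ∫ x in Set.Ioi (0:ℝ), (1 - Real.exp (-(c * x ^ (-α)))) * x ^ (-α)
      = c ^ (1/α - 1) / α * ∫ z in Set.Ioi (0:ℝ), (1 - Real.exp (-z)) * z ^ (-(1/α)) := by
  have hα0 : 0 < α := by linarith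
  set p : ℝ := 1/α with hp
  have hp0 : 0 < p := by positivity
  set f : ℝ → ℝ := fun z => c ^ p * z ^ (-p) with hf
  set f' : ℝ → ℝ := fun z => c ^ p * (-p * z ^ (-p - 1)) with hf'
  have himg : f '' Set.Ioi 0 = Set.Ioi 0 := by
    apply Set.Subset.antisymm
    · rintro y ⟨z, hz, rfl⟩
      exact mul_pos (Real.rpow_pos_of_pos hc _) (Real.rpow_pos_of_pos hz _)
    · intro y hy
      have hy0 : (0:ℝ) < y := hy
      refine ⟨c * y ^ (-α), mul_pos hc (Real.rpow_pos_of_pos hy0 _), ?_⟩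
      show c ^ p * (c * y ^ (-α)) ^ (-p) = y
      rw [Real.mul_rpow hc.le (Real.rpow_nonneg hy0.le _), ← Real.rpow_mul hy0.le,
        ← mul_assoc, ← Real.rpow_add hc,
        show p + -p = (0:ℝ) by ring, Real.rpow_zero, one_mul,
        show -α * -p = (1:ℝ) by rw [hp]; field_simp, Real.rpow_one]
  have hderiv : ∀ z ∈ Set.Ioi (0:ℝ), HasDerivWithinAt f (f' z) (Set.Ioi 0) z := by
    intro z hz
    exact ((Real.hasDerivAt_rpow_const (p := -p)
      (Or.inl (ne_of_gt hz))).const_mul (c ^ p)).hasDerivWithinAt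
  have hinj : Set.InjOn f (Set.Ioi 0) := by
    have hanti : StrictAntiOn f (Set.Ioi 0) := by
      intro x hx y hy hxy
      exact mul_lt_mul_of_pos_left
        (Real.rpow_lt_rpow_of_neg hx hxy (neg_neg_iff_pos.mpr hp0)) (Real.rpow_pos_of_pos hc _)
    exact hanti.injOn
  calc ∫ x in Set.Ioi (0:ℝ), (1 - Real.exp (-(c * x ^ (-α)))) * x ^ (-α)
      = ∫ x in f '' Set.Ioi 0, (1 - Real.exp (-(c * x ^ (-α)))) * x ^ (-α) := by rw [himg]
    _ = ∫ z in Set.Ioi (0:ℝ),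
          |f' z| • ((1 - Real.exp (-(c * (f z) ^ (-α)))) * (f z) ^ (-α)) :=
        integral_image_eq_integral_abs_deriv_smul measurableSet_Ioi hderiv hinj _
    _ = ∫ z in Set.Ioi (0:ℝ), c ^ (p - 1) / α * ((1 - Real.exp (-z)) * z ^ (-p)) := by
        apply setIntegral_congr_fun measurableSet_Ioi
        intro z hz
        have hz0 : (0:ℝ) < z := hz
        have e1 : (f z) ^ (-α) = c⁻¹ * z := by
          show (c ^ p * z ^ (-p)) ^ (-α) = c⁻¹ * z
          rw [Real.mul_rpow (Real.rpow_nonneg hc.le _) (Real.rpow_nonneg hz0.le _),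
            ← Real.rpow_mul hc.le, ← Real.rpow_mul hz0.le,
            show p * -α = (-1:ℝ) by rw [hp]; field_simp,
            show -p * -α = (1:ℝ) by rw [hp]; field_simp,
            Real.rpow_one, Real.rpow_neg_one]
        have e2 : c * (c⁻¹ * z) = z := by field_simp
        have e3 : |f' z| = c ^ p * (p * z ^ (-p - 1)) := by
          show |c ^ p * (-p * z ^ (-p - 1))| = _
          rw [abs_mul, abs_of_pos (Real.rpow_pos_of_pos hc _), abs_mul, abs_neg,
            abs_of_pos hp0, abs_of_pos (Real.rpow_pos_of_pos hz0 _)]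
        have e4 : z ^ (-p - 1) * z = z ^ (-p) := by
          nth_rewrite 2 [← Real.rpow_one z]
          rw [← Real.rpow_add hz0]
          norm_num
        have e5 : c ^ p * c⁻¹ = c ^ (p - 1) := by
          rw [← Real.rpow_neg_one c, ← Real.rpow_add hc, show p + -1 = p - 1 by ring]
        simp only [smul_eq_mul]
        rw [e3, e1, e2]
        calc c ^ p * (p * z ^ (-p - 1)) * ((1 - Real.exp (-z)) * (c⁻¹ * z))
            = (c ^ p * c⁻¹) * p * ((1 - Real.exp (-z)) * (z ^ (-p - 1) * z)) := by ring
          _ = c ^ (p - 1) * p * ((1 - Real.exp (-z)) * z ^ (-p)) := by rw [e4, e5]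
          _ = c ^ (p - 1) / α * ((1 - Real.exp (-z)) * z ^ (-p)) := by
              rw [hp]; field_simp
    _ = c ^ (1/α - 1) / α * ∫ z in Set.Ioi (0:ℝ), (1 - Real.exp (-z)) * z ^ (-(1/α)) := by
        rw [integral_const_mul, hp]






variable {α : ℝ}

/-- slope limit for `t ↦ 1 - exp (-(t*m))` at `0`. -/
lemma slope_tendsto (m : ℝ) :
    Tendsto (fun t : ℝ => (1 - Real.exp (-(t * m))) / t) (nhdsWithin 0 {(0:ℝ)}ᶜ) (nhds m) := by
  have hd : HasDerivAt (fun t : ℝ => 1 - Real.exp (-(t * m))) m 0 := by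
    have h1 : HasDerivAt (fun t : ℝ => -(t * m)) (-m) 0 := (hasDerivAt_mul_const m).neg
    have h2 := h1.exp
    have h3 := h2.const_sub 1
    simpa using h3
  have hs := hasDerivAt_iff_tendsto_slope.mp hd
  apply hs.congr
  intro t
  simp [slope_def_field]

lemma key_tendsto (hα1 : 1/2 < α) (hα2 : α < 1) {a : ℝ} (ha : 0 < a) {b : ℕ → ℝ}
    (hb0 : ∀ j, 0 ≤ b j) (hbne : ∀ᶠ j in atTop, b j ≠ 0) (hb : Tendsto b atTop (nhds 0)) :
    Tendsto (fun j => (∫ x in Set.Ioi (0:ℝ),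
        (1 - Real.exp (-(a * x ^ (-α)))) * (1 - Real.exp (-(b j * x ^ (-α))))) / b j)
      atTop
      (nhds (∫ x in Set.Ioi (0:ℝ), (1 - Real.exp (-(a * x ^ (-α)))) * x ^ (-α))) := by
  have hα0 : 0 < α := by linarith
  have hcont : ∀ k : ℝ, ContinuousOn (fun x : ℝ => 1 - Real.exp (-(k * x ^ (-α))))
      (Set.Ioi 0) := fun k => continuousOn_const.sub
    (Real.continuous_exp.comp_continuousOn ((continuousOn_const.mul
      (fun x hx => (Real.continuousAt_rpow_const x (-α)
        (Or.inl (ne_of_gt hx))).continuousWithinAt)).neg))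
  simp only [← MeasureTheory.integral_div]
  apply tendsto_integral_of_dominated_convergence
    (fun x => (1 - Real.exp (-(a * x ^ (-α)))) * x ^ (-α))
  · intro j
    exact (((hcont a).mul (hcont (b j))).div_const (b j)).aestronglyMeasurable
      measurableSet_Ioi
  · exact integrable_bound hα1 hα2 ha.le
  · intro j
    filter_upwards [ae_restrict_mem measurableSet_Ioi] with x hx
    have hx0 : (0:ℝ) < x := hx
    have hm : 0 ≤ x ^ (-α) := Real.rpow_nonneg hx0.le _
    have hΘa0 : 0 ≤ 1 - Real.exp (-(a * x ^ (-α))) :=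
      one_sub_exp_nonneg (mul_nonneg ha.le hm)
    rcases eq_or_lt_of_le (hb0 j) with h0 | hbj
    · rw [← h0]
      simp [mul_nonneg hΘa0 hm]
    · have hΘb0 : 0 ≤ 1 - Real.exp (-(b j * x ^ (-α))) :=
        one_sub_exp_nonneg (mul_nonneg hbj.le hm)
      rw [Real.norm_eq_abs, abs_of_nonneg (div_nonneg (mul_nonneg hΘa0 hΘb0) hbj.le)]
      rw [mul_div_assoc]
      apply mul_le_mul_of_nonneg_left _ hΘa0
      rw [div_le_iff₀ hbj]
      calc 1 - Real.exp (-(b j * x ^ (-α))) ≤ b j * x ^ (-α) := one_sub_exp_le _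
        _ = x ^ (-α) * b j := mul_comm _ _
  · filter_upwards [ae_restrict_mem measurableSet_Ioi] with x hx
    have hx0 : (0:ℝ) < x := hx
    have hbt : Tendsto b atTop (nhdsWithin 0 {(0:ℝ)}ᶜ) := by
      rw [tendsto_nhdsWithin_iff]
      exact ⟨hb, hbne.mono fun j h => h⟩
    have h1 : Tendsto (fun j => (1 - Real.exp (-(b j * x ^ (-α)))) / b j) atTop
        (nhds (x ^ (-α))) := (slope_tendsto (x ^ (-α))).comp hbt
    have h2 := h1.const_mul (1 - Real.exp (-(a * x ^ (-α))))
    apply h2.congr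
    intro j
    rw [mul_div_assoc]

noncomputable def phi (t : ℝ) : ℝ := if t = 0 then 1 else (1 - Real.exp (-t)) / t

lemma phi_tendsto : Tendsto phi (nhds 0) (nhds 1) := by
  rw [← nhdsNE_sup_pure (0:ℝ), tendsto_sup]
  constructor
  · have hd : HasDerivAt (fun t : ℝ => 1 - Real.exp (-(t * 1))) 1 0 := by
      have h1 : HasDerivAt (fun t : ℝ => -(t * 1)) (-1) 0 := (hasDerivAt_mul_const 1).neg
      simpa using (h1.exp.const_sub 1)
    have hs := hasDerivAt_iff_tendsto_slope.mp hd
    have hs' : Tendsto (fun t : ℝ => (1 - Real.exp (-t)) / t)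
        (nhdsWithin 0 {(0:ℝ)}ᶜ) (nhds 1) := by
      apply hs.congr
      intro t
      simp [slope_def_field]
    apply hs'.congr'
    filter_upwards [self_mem_nhdsWithin] with t ht
    have ht' : t ≠ 0 := ht
    rw [phi, if_neg ht']
  · rw [tendsto_pure_left]
    intro s hs
    simpa [phi] using mem_of_mem_nhds hs

lemma phi_spec (t D : ℝ) : (1 - Real.exp (-t)) / D = phi t * (t / D) := by
  by_cases h : t = 0
  · simp [phi, h]
  · rw [phi, if_neg h, div_mul_div_comm, mul_comm t D, mul_div_mul_right _ _ h]



end Stmt5Aux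

open Set

/-- With `p_∞(i,j) = 1 − e^{−λ_{ij}}`, the iterated limit
`lim_{i→∞} lim_{j→∞} p_∞(i,j)/(λ² h(i,j)) = 1`: for each fixed `i` the inner limit
over `j` exists, and the resulting values converge to `1` as `i → ∞`. -/
theorem stmt5 (τ cF lam : ℝ) (hτ : τ ∈ Set.Ioo (2 : ℝ) 3) (hcF : 0 < cF) (hlam : 0 < lam) :
    ∃ L : ℕ → ℝ,
      (∀ i : ℕ, 1 ≤ i →
        Tendsto
          (fun j : ℕ =>
            (1 - Real.exp (-(lamIJ τ cF lam i j))) / (lam ^ 2 * hOf τ cF (i : ℝ) (j : ℝ)))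
          atTop (nhds (L i)))
      ∧ Tendsto L atTop (nhds 1) := by
  obtain ⟨hτ2, hτ3⟩ := hτ
  have hα1 : 1/2 < alphaOf τ := by
    rw [alphaOf, lt_div_iff₀ (by linarith)]; linarith
  have hα2 : alphaOf τ < 1 := by
    rw [alphaOf, div_lt_one (by linarith)]; linarith
  set α := alphaOf τ with hαdef
  have hα0 : 0 < α := by linarith
  have hμ : 0 < muOf τ cF := div_pos hcF (by linarith)
  set μ := muOf τ cF with hμdef
  set c : ℝ := cF * cF / μ with hcdef
  have hc : 0 < c := by positivity
  have hA : 0 < AalphaOf τ := Stmt5Aux.A_pos hα1 hα2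
  set A := AalphaOf τ with hAdef
  have hBeq : BalphaOf τ cF = cF ^ (2/α) * A / (α * μ ^ (1/α)) := rfl
  have hB : 0 < BalphaOf τ cF := by
    rw [hBeq]
    exact div_pos (mul_pos (Real.rpow_pos_of_pos hcF _) hA)
      (mul_pos hα0 (Real.rpow_pos_of_pos hμ _))
  set B := BalphaOf τ cF with hBdef
  refine ⟨fun _ => 1, fun i hi => ?_, tendsto_const_nhds⟩
  have hipos : (0:ℝ) < (i:ℝ) := by exact_mod_cast hi
  set a : ℝ := c * (i:ℝ) ^ (-α) with hadef
  have ha : 0 < a := mul_pos hc (Real.rpow_pos_of_pos hipos _)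
  set b : ℕ → ℝ := fun j => c * (j:ℝ) ^ (-α) with hbdef
  have hb0 : ∀ j, 0 ≤ b j := fun j =>
    mul_nonneg hc.le (Real.rpow_nonneg (Nat.cast_nonneg j) _)
  have hbpos : ∀ j : ℕ, 1 ≤ j → 0 < b j := fun j hj =>
    mul_pos hc (Real.rpow_pos_of_pos (by exact_mod_cast hj) _)
  have hbne : ∀ᶠ j in atTop, b j ≠ 0 :=
    eventually_atTop.mpr ⟨1, fun j hj => (hbpos j hj).ne'⟩
  have hbt : Tendsto b atTop (nhds 0) := by
    have hnat : Tendsto (fun j : ℕ => (j:ℝ)) atTop atTop := tendsto_natCast_atTop_atTop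
    have h := (tendsto_rpow_neg_atTop hα0).comp hnat
    have h2 := h.const_mul c
    simpa using h2
  set G : ℕ → ℝ := fun j => ∫ x in Set.Ioi (0:ℝ),
    (1 - Real.exp (-(a * x ^ (-α)))) * (1 - Real.exp (-(b j * x ^ (-α)))) with hGdef
  have hlamG : ∀ j, lamIJ τ cF lam i j = lam ^ 2 * G j := by
    intro j
    have e1 : ∀ k : ℕ, ∀ x : ℝ, ThetaOf τ cF k x
        = 1 - Real.exp (-(c * (k:ℝ) ^ (-α) * x ^ (-α))) := by
      intro k x
      rw [ThetaOf, thetaOf]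
      congr 3
      rw [hcdef, ← hμdef, ← hαdef]
      ring
    rw [lamIJ, hGdef]
    congr 1
    apply setIntegral_congr_fun measurableSet_Ioi
    intro x _
    simp only [e1, hadef, hbdef]
  set I : ℝ := ∫ x in Set.Ioi (0:ℝ),
    (1 - Real.exp (-(a * x ^ (-α)))) * x ^ (-α) with hIdef
  have hkey : Tendsto (fun j => G j / b j) atTop (nhds I) :=
    Stmt5Aux.key_tendsto hα1 hα2 ha hb0 hbne hbt
  have hIeq : I = a ^ (1/α - 1) / α * A := by
    rw [hIdef, Stmt5Aux.change_var hα1 hα2 ha, hAdef]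
    rfl
  set K : ℝ := c / (B * (i:ℝ) ^ (α - 1)) with hKdef
  have hine : ((i:ℝ) ^ (α - 1)) ≠ 0 := (Real.rpow_pos_of_pos hipos _).ne'
  have hIK : I * K = 1 := by
    have e1 : a ^ (1/α - 1) = c ^ (1/α - 1) * (i:ℝ) ^ (α - 1) := by
      rw [hadef, Real.mul_rpow hc.le (Real.rpow_nonneg hipos.le _),
        ← Real.rpow_mul hipos.le, show -α * (1/α - 1) = α - 1 by field_simp; ring]
    have e2 : c ^ (1/α - 1) * c = c ^ (1/α) := by
      nth_rewrite 2 [← Real.rpow_one c]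
      rw [← Real.rpow_add hc, show 1/α - 1 + 1 = 1/α by ring]
    have e3 : c ^ (1/α) = cF ^ (2/α) / μ ^ (1/α) := by
      rw [hcdef, Real.div_rpow (by positivity) hμ.le]
      congr 1
      rw [Real.mul_rpow hcF.le hcF.le, ← Real.rpow_add hcF, show 1/α + 1/α = 2/α by ring]
    have step1 : I * K = c ^ (1/α) * A / (α * B) := by
      rw [hIeq, hKdef, e1, ← e2]
      field_simp
    rw [step1, e3, hBeq]
    have h1 : (cF ^ (2/α)) ≠ 0 := (Real.rpow_pos_of_pos hcF _).ne'
    have h2 : (μ ^ (1/α)) ≠ 0 := (Real.rpow_pos_of_pos hμ _).ne'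
    field_simp
  have hG0 : Tendsto (fun j => lam ^ 2 * G j) atTop (nhds 0) := by
    have h1 : Tendsto (fun j => lam ^ 2 * (b j * (G j / b j))) atTop
        (nhds (lam ^ 2 * (0 * I))) := (hbt.mul hkey).const_mul _
    rw [zero_mul, mul_zero] at h1
    apply h1.congr'
    filter_upwards [eventually_ge_atTop 1] with j hj
    rw [mul_div_cancel₀ _ (hbpos j hj).ne']
  have hφ : Tendsto (fun j => Stmt5Aux.phi (lam ^ 2 * G j)) atTop (nhds 1) :=
    Stmt5Aux.phi_tendsto.comp hG0
  have hmain : Tendsto (fun j => Stmt5Aux.phi (lam ^ 2 * G j) * (G j / b j * K)) atTop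
      (nhds (1 * (I * K))) := hφ.mul (hkey.mul_const K)
  rw [hIK, mul_one] at hmain
  apply hmain.congr'
  filter_upwards [eventually_ge_atTop i, eventually_ge_atTop 1] with j hji hj1
  have hjpos : (0:ℝ) < (j:ℝ) := by exact_mod_cast hj1
  rw [hlamG j, Stmt5Aux.phi_spec (lam ^ 2 * G j) (lam ^ 2 * hOf τ cF i j)]
  congr 1
  have hh : hOf τ cF (i:ℝ) (j:ℝ) = B * (i:ℝ) ^ (α - 1) * (j:ℝ) ^ (-α) := by
    rw [hOf, ← hαdef, ← hBdef, min_eq_left (by exact_mod_cast hji : (i:ℝ) ≤ (j:ℝ)),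
      max_eq_right (by exact_mod_cast hji : (i:ℝ) ≤ (j:ℝ)),
      show -(1 - α) = α - 1 by ring]
  rw [hh, hKdef, hbdef]
  have h2 : ((j:ℝ) ^ (-α)) ≠ 0 := (Real.rpow_pos_of_pos hjpos _).ne'
  field_simp
end
end

section
/- Let α ∈ (1/2, 1) and b ∈ (1/2, α), and set K_b = 1/(α+b−1) + 1/(α−b). Define g_1(i,j) = (min(i,j))^{−(1−α)} (max(i,j))^{−α} for positive integers i, j, and recursively g_{k+1}(i,j) = ∑_{v=1}^∞ g_1(i,v) g_k(v,j). Then for every k ≥ 1 and all positive integers i, j, the defining series converge and g_k(i,j) ≤ K_b^k (min(i,j))^{−(1−b)} (max(i,j))^{−b}. -/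
open scoped ENNReal

noncomputable section

/-- The one-step kernel `g_1(i,j) = (min i j)^{−(1−α)} (max i j)^{−α}` on the
positive integers, valued in `[0,∞]`. -/
def gOne (α : ℝ) (i j : ℕ+) : ℝ≥0∞ :=
  ENNReal.ofReal
    ((min ((i : ℕ) : ℝ) ((j : ℕ) : ℝ)) ^ (-(1 - α)) * (max ((i : ℕ) : ℝ) ((j : ℕ) : ℝ)) ^ (-α))

/-- The iterated kernels: `gIter α 0` is the identity kernel and
`gIter α (k+1) i j = ∑_{v=1}^∞ g_1(i,v) · gIter α k v j`, so that `gIter α k = g_k`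
(the `k`-fold iterate of `g_1`) for `k ≥ 1`. -/
def gIter (α : ℝ) : ℕ → ℕ+ → ℕ+ → ℝ≥0∞
  | 0, i, j => if i = j then 1 else 0
  | n + 1, i, j => ∑' v : ℕ+, gOne α i v * gIter α n v j

open Real Finset


lemma my_step_pos {p a : ℝ} (hp0 : 0 < p) (hp1 : p ≤ 1) (ha : 0 ≤ a) :
    p * (a + 1) ^ (p - 1) ≤ (a + 1) ^ p - a ^ p := by
  rcases eq_or_lt_of_le ha with h0 | h0
  · rw [← h0]
    rw [Real.zero_rpow hp0.ne', zero_add, Real.one_rpow, Real.one_rpow]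
    linarith
  · have hcont : ContinuousOn (fun x : ℝ => x ^ p) (Set.Icc a (a + 1)) := by
      intro x hx
      exact (Real.continuousAt_rpow_const x p (Or.inl (by linarith [hx.1]))).continuousWithinAt
    have hderiv : ∀ x ∈ Set.Ioo a (a + 1),
        HasDerivAt (fun x : ℝ => x ^ p) (p * x ^ (p - 1)) x := by
      intro x hx
      exact Real.hasDerivAt_rpow_const (Or.inl (by linarith [hx.1]))
    obtain ⟨c, hc, hceq⟩ := exists_hasDerivAt_eq_slope (fun x : ℝ => x ^ p)
      (fun x => p * x ^ (p - 1)) (by linarith : a < a + 1) hcont hderiv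
    have h1 : (a + 1) ^ p - a ^ p = p * c ^ (p - 1) := by
      rw [hceq]; ring
    rw [h1]
    have : (a + 1) ^ (p - 1) ≤ c ^ (p - 1) :=
      Real.rpow_le_rpow_of_nonpos (by linarith [hc.1]) (le_of_lt hc.2) (by linarith)
    nlinarith

lemma my_step_neg {p a : ℝ} (hp : p < 0) (ha : 0 < a) :
    (-p) * (a + 1) ^ (p - 1) ≤ a ^ p - (a + 1) ^ p := by
  have hcont : ContinuousOn (fun x : ℝ => x ^ p) (Set.Icc a (a + 1)) := by
    intro x hx
    exact (Real.continuousAt_rpow_const x p (Or.inl (by linarith [hx.1]))).continuousWithinAt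
  have hderiv : ∀ x ∈ Set.Ioo a (a + 1),
      HasDerivAt (fun x : ℝ => x ^ p) (p * x ^ (p - 1)) x := by
    intro x hx
    exact Real.hasDerivAt_rpow_const (Or.inl (by linarith [hx.1]))
  obtain ⟨c, hc, hceq⟩ := exists_hasDerivAt_eq_slope (fun x : ℝ => x ^ p)
    (fun x => p * x ^ (p - 1)) (by linarith : a < a + 1) hcont hderiv
  have h1 : a ^ p - (a + 1) ^ p = (-p) * c ^ (p - 1) := by
    rw [show ((fun x : ℝ => x ^ p) (a+1) - (fun x : ℝ => x ^ p) a) / (a + 1 - a)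
        = (a+1)^p - a^p by field_simp; ring] at hceq
    nlinarith [hceq]
  rw [h1]
  have : (a + 1) ^ (p - 1) ≤ c ^ (p - 1) :=
    Real.rpow_le_rpow_of_nonpos (by linarith [hc.1]) (le_of_lt hc.2) (by linarith)
  nlinarith

lemma my_sum_pos {p : ℝ} (hp0 : 0 < p) (hp1 : p ≤ 1) (n : ℕ) :
    ∀ m : ℕ, n ≤ m →
      ∑ v ∈ Finset.Ioc n m, ((v : ℝ)) ^ (p - 1) ≤ (((m : ℝ)) ^ p - ((n : ℝ)) ^ p) / p := by
  intro m hm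
  induction m with
  | zero => simp_all
  | succ m ih =>
    rcases Nat.lt_or_ge n (m + 1) with h | h
    · have hnm : n ≤ m := Nat.lt_succ_iff.mp h
      rw [Finset.sum_Ioc_succ_top hnm]
      have hstep : ((m + 1 : ℕ) : ℝ) ^ (p - 1) ≤ (((m+1 : ℕ) : ℝ) ^ p - ((m : ℕ) : ℝ) ^ p) / p := by
        rw [le_div_iff₀ hp0]
        have := my_step_pos hp0 hp1 (Nat.cast_nonneg m : (0:ℝ) ≤ m)
        push_cast
        nlinarith [this]
      have := ih hnm
      have hrg : (((m:ℝ)) ^ p - ((n:ℝ)) ^ p) / p + ((((m:ℕ)+1 : ℕ) : ℝ) ^ p - ((m : ℕ) : ℝ) ^ p) / p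
          = ((((m:ℕ)+1:ℕ) : ℝ) ^ p - ((n:ℝ)) ^ p) / p := by push_cast; ring
      push_cast at *
      linarith
    · have : n = m + 1 := le_antisymm hm h
      subst this
      simp

lemma my_sum_neg_aux {p : ℝ} (hp : p < 0) {n : ℕ} (hn : 1 ≤ n) :
    ∀ m : ℕ, n ≤ m →
      ∑ v ∈ Finset.Ioc n m, ((v : ℝ)) ^ (p - 1) ≤ (((n : ℝ)) ^ p - ((m : ℝ)) ^ p) / (-p) := by
  intro m hm
  induction m with
  | zero => omega
  | succ m ih =>
    rcases Nat.lt_or_ge n (m + 1) with h | h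
    · have hnm : n ≤ m := Nat.lt_succ_iff.mp h
      rw [Finset.sum_Ioc_succ_top hnm]
      have hm0 : (0:ℝ) < (m:ℝ) := by
        have : 1 ≤ m := le_trans hn hnm
        exact_mod_cast Nat.lt_of_lt_of_le Nat.zero_lt_one this
      have hstep : ((m + 1 : ℕ) : ℝ) ^ (p - 1)
          ≤ (((m : ℕ) : ℝ) ^ p - ((m+1 : ℕ) : ℝ) ^ p) / (-p) := by
        rw [le_div_iff₀ (by linarith : (0:ℝ) < -p)]
        have := my_step_neg hp hm0
        push_cast
        nlinarith [this]
      have := ih hnm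
      have hrg : (((n:ℝ)) ^ p - ((m:ℝ)) ^ p) / (-p)
            + (((m : ℕ) : ℝ) ^ p - (((m:ℕ)+1 : ℕ) : ℝ) ^ p) / (-p)
          = (((n:ℝ)) ^ p - (((m:ℕ)+1:ℕ) : ℝ) ^ p) / (-p) := by push_cast; ring
      push_cast at *
      linarith
    · have : n = m + 1 := le_antisymm hm h
      subst this
      simp

lemma my_sum_neg {p : ℝ} (hp : p < 0) {n : ℕ} (hn : 1 ≤ n) (m : ℕ) :
    ∑ v ∈ Finset.Ioc n m, ((v : ℝ)) ^ (p - 1) ≤ ((n : ℝ)) ^ p / (-p) := by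
  rcases Nat.lt_or_ge m n with h | h
  · rw [Finset.Ioc_eq_empty (by omega)]
    simp only [Finset.sum_empty]
    have : (0:ℝ) < ((n:ℝ)) ^ p := Real.rpow_pos_of_pos (by exact_mod_cast hn) p
    have h2 : (0:ℝ) < -p := by linarith
    positivity
  · refine (my_sum_neg_aux hp hn m h).trans ?_
    have hmp : (0:ℝ) < ((m:ℝ)) ^ p := Real.rpow_pos_of_pos (by exact_mod_cast lt_of_lt_of_le Nat.zero_lt_one (le_trans hn h)) p
    have : (0:ℝ) < -p := by linarith
    apply div_le_div_of_nonneg_right (by linarith) this.le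

lemma rpow_collect {x : ℝ} (hx : 0 < x) (a b : ℝ) : x ^ a * x ^ b = x ^ (a + b) :=
  (Real.rpow_add hx a b).symm

lemma my_key (α b : ℝ) (h1 : 1/2 < α) (h2 : α < 1) (h3 : 1/2 < b) (h4 : b < α)
    (i j : ℕ+) (N : ℕ) :
    ∑ v ∈ Finset.Ioc 0 N,
        (min ((i:ℕ):ℝ) ((v:ℕ):ℝ)) ^ (α-1) * (max ((i:ℕ):ℝ) ((v:ℕ):ℝ)) ^ (-α) *
          ((min ((v:ℕ):ℝ) ((j:ℕ):ℝ)) ^ (b-1) * (max ((v:ℕ):ℝ) ((j:ℕ):ℝ)) ^ (-b))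
      ≤ (1 / (α + b - 1) + 1 / (α - b)) *
          ((min ((i:ℕ):ℝ) ((j:ℕ):ℝ)) ^ (b-1) * (max ((i:ℕ):ℝ) ((j:ℕ):ℝ)) ^ (-b)) := by
  set I : ℝ := ((i:ℕ):ℝ) with hI
  set J : ℝ := ((j:ℕ):ℝ) with hJ
  have hI1 : (1:ℝ) ≤ I := by rw [hI]; exact_mod_cast i.pos
  have hJ1 : (1:ℝ) ≤ J := by rw [hJ]; exact_mod_cast j.pos
  have hI0 : (0:ℝ) < I := by linarith
  have hJ0 : (0:ℝ) < J := by linarith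
  have hs0 : (0:ℝ) < α + b - 1 := by linarith
  have hs1 : α + b - 1 ≤ 1 := by linarith
  have hq0 : (0:ℝ) < α - b := by linarith
  set F : ℕ → ℝ := fun v =>
    (min I ((v:ℕ):ℝ)) ^ (α-1) * (max I ((v:ℕ):ℝ)) ^ (-α) *
      ((min ((v:ℕ):ℝ) J) ^ (b-1) * (max ((v:ℕ):ℝ) J) ^ (-b)) with hF
  have hFnn : ∀ v : ℕ, 0 ≤ F v := by
    intro v
    have e1 := Real.rpow_nonneg (le_min hI0.le (Nat.cast_nonneg v) : (0:ℝ) ≤ min I _) (α-1)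
    have e2 := Real.rpow_nonneg (le_max_of_le_left hI0.le : (0:ℝ) ≤ max I ((v:ℕ):ℝ)) (-α)
    have e3 := Real.rpow_nonneg (le_min (Nat.cast_nonneg v) hJ0.le : (0:ℝ) ≤ min _ J) (b-1)
    have e4 := Real.rpow_nonneg (le_max_of_le_right hJ0.le : (0:ℝ) ≤ max ((v:ℕ):ℝ) J) (-b)
    positivity
  set M := max N (i:ℕ) with hM
  have hsub : ∑ v ∈ Finset.Ioc 0 N, F v ≤ ∑ v ∈ Finset.Ioc 0 M, F v :=
    Finset.sum_le_sum_of_subset_of_nonneg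
      (Finset.Ioc_subset_Ioc le_rfl (le_max_left _ _)) (fun v _ _ => hFnn v)
  rcases le_or_gt ((i:ℕ)) ((j:ℕ)) with hij | hij
  · -- case I ≤ J
    have hIJ : I ≤ J := by rw [hI, hJ]; exact_mod_cast hij
    have hminIJ : min I J = I := min_eq_left hIJ
    have hmaxIJ : max I J = J := max_eq_right hIJ
    have hsplit : ∑ v ∈ Finset.Ioc 0 (i:ℕ), F v + ∑ v ∈ Finset.Ioc (i:ℕ) M, F v
        = ∑ v ∈ Finset.Ioc 0 M, F v :=
      Finset.sum_Ioc_consecutive F (Nat.zero_le _) (le_max_right _ _)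
    -- piece 1
    have hp1 : ∑ v ∈ Finset.Ioc 0 (i:ℕ), F v
        ≤ I ^ (b-1) * J ^ (-b) / (α + b - 1) := by
      have hterm : ∀ v ∈ Finset.Ioc 0 (i:ℕ), F v
          = (I ^ (-α) * J ^ (-b)) * ((v:ℝ)) ^ ((α + b - 1) - 1) := by
        intro v hv
        simp only [Finset.mem_Ioc] at hv
        have hv0 : (0:ℝ) < (v:ℝ) := by exact_mod_cast hv.1
        have hvI : ((v:ℕ):ℝ) ≤ I := by rw [hI]; exact_mod_cast hv.2
        have hvJ : ((v:ℕ):ℝ) ≤ J := le_trans hvI hIJ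
        rw [hF]
        simp only [min_eq_right hvI, max_eq_left hvI, min_eq_left hvJ, max_eq_right hvJ]
        rw [show (v:ℝ) ^ (α-1) * I ^ (-α) * ((v:ℝ) ^ (b-1) * J ^ (-b))
            = (I ^ (-α) * J ^ (-b)) * ((v:ℝ) ^ (α-1) * (v:ℝ) ^ (b-1)) by ring,
          rpow_collect hv0, show α - 1 + (b-1) = α + b - 1 - 1 by ring]
      rw [Finset.sum_congr rfl hterm, ← Finset.mul_sum]
      have hsum := my_sum_pos hs0 hs1 0 (i:ℕ) (Nat.zero_le _)
      rw [Nat.cast_zero, Real.zero_rpow hs0.ne', sub_zero] at hsum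
      have hc : (0:ℝ) ≤ I ^ (-α) * J ^ (-b) := by positivity
      calc (I ^ (-α) * J ^ (-b)) * ∑ v ∈ Finset.Ioc 0 (i:ℕ), ((v:ℝ)) ^ ((α + b - 1) - 1)
          ≤ (I ^ (-α) * J ^ (-b)) * (I ^ (α + b - 1) / (α + b - 1)) :=
            mul_le_mul_of_nonneg_left hsum hc
        _ = I ^ (b-1) * J ^ (-b) / (α + b - 1) := by
            rw [show (I ^ (-α) * J ^ (-b)) * (I ^ (α + b - 1) / (α + b - 1))
              = (I ^ (-α) * I ^ (α + b - 1)) * J ^ (-b) / (α + b - 1) by ring,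
              rpow_collect hI0, show -α + (α + b - 1) = b - 1 by ring]
    -- piece 2
    have hp2 : ∑ v ∈ Finset.Ioc (i:ℕ) M, F v
        ≤ I ^ (b-1) * J ^ (-b) / (α - b) := by
      have hterm : ∀ v ∈ Finset.Ioc (i:ℕ) M, F v
          ≤ (I ^ (α-1) * J ^ (-b)) * ((v:ℝ)) ^ ((b - α) - 1) := by
        intro v hv
        simp only [Finset.mem_Ioc] at hv
        have hvI : I ≤ ((v:ℕ):ℝ) := by rw [hI]; exact_mod_cast hv.1.le
        have hv0 : (0:ℝ) < (v:ℝ) := lt_of_lt_of_le hI0 hvI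
        rw [hF]
        simp only [min_eq_left hvI, max_eq_right hvI]
        rcases le_or_gt ((v:ℕ):ℝ) J with hvJ | hvJ
        · simp only [min_eq_left hvJ, max_eq_right hvJ]
          rw [show I ^ (α-1) * (v:ℝ) ^ (-α) * ((v:ℝ) ^ (b-1) * J ^ (-b))
              = (I ^ (α-1) * J ^ (-b)) * ((v:ℝ) ^ (-α) * (v:ℝ) ^ (b-1)) by ring,
            rpow_collect hv0, show -α + (b-1) = b - α - 1 by ring]
        · have hvJ' : J ≤ (v:ℝ) := hvJ.le
          simp only [min_eq_right hvJ', max_eq_left hvJ']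
          -- F v = I^(α-1) v^(-α) * (J^(b-1) * v^(-b)); compare J^(b-1) v^(-b) ≤ J^(-b) v^(b-1)
          have hkey : J ^ (b-1) * (v:ℝ) ^ (-b) ≤ J ^ (-b) * ((v:ℝ)) ^ (b-1) := by
            have h2b : J ^ (2*b - 1) ≤ ((v:ℝ)) ^ (2*b - 1) :=
              Real.rpow_le_rpow hJ0.le hvJ' (by linarith)
            have eJ : J ^ (b-1) = J ^ (2*b-1) * J ^ (-b) := by
              rw [rpow_collect hJ0, show 2*b-1 + -b = b - 1 by ring]
            have eV : ((v:ℝ)) ^ (b-1) = ((v:ℝ)) ^ (2*b-1) * ((v:ℝ)) ^ (-b) := by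
              rw [rpow_collect hv0, show 2*b-1 + -b = b - 1 by ring]
            rw [eJ, eV]
            have hnn : (0:ℝ) ≤ J ^ (-b) * ((v:ℝ)) ^ (-b) := by positivity
            calc J ^ (2*b-1) * J ^ (-b) * ((v:ℝ)) ^ (-b)
                ≤ ((v:ℝ)) ^ (2*b-1) * J ^ (-b) * ((v:ℝ)) ^ (-b) := by nlinarith [h2b, hnn]
              _ = J ^ (-b) * (((v:ℝ)) ^ (2*b-1) * ((v:ℝ)) ^ (-b)) := by ring
            -- goal now: ≤ J ^ (-b) * (v ^ (2b-1) * v ^(-b)) done by ring above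
          have hmul : (0:ℝ) ≤ I ^ (α-1) * ((v:ℝ)) ^ (-α) := by positivity
          calc I ^ (α-1) * ((v:ℝ)) ^ (-α) * (J ^ (b-1) * ((v:ℝ)) ^ (-b))
              ≤ I ^ (α-1) * ((v:ℝ)) ^ (-α) * (J ^ (-b) * ((v:ℝ)) ^ (b-1)) :=
                mul_le_mul_of_nonneg_left hkey hmul
            _ = (I ^ (α-1) * J ^ (-b)) * (((v:ℝ)) ^ (-α) * ((v:ℝ)) ^ (b-1)) := by ring
            _ = (I ^ (α-1) * J ^ (-b)) * ((v:ℝ)) ^ ((b - α) - 1) := by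
                rw [rpow_collect hv0, show -α + (b-1) = b - α - 1 by ring]
      have hsum := my_sum_neg (show b - α < 0 by linarith) i.pos M
      have hc : (0:ℝ) ≤ I ^ (α-1) * J ^ (-b) := by positivity
      calc ∑ v ∈ Finset.Ioc (i:ℕ) M, F v
          ≤ ∑ v ∈ Finset.Ioc (i:ℕ) M, (I ^ (α-1) * J ^ (-b)) * ((v:ℝ)) ^ ((b - α) - 1) :=
            Finset.sum_le_sum hterm
        _ = (I ^ (α-1) * J ^ (-b)) * ∑ v ∈ Finset.Ioc (i:ℕ) M, ((v:ℝ)) ^ ((b - α) - 1) := by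
            rw [Finset.mul_sum]
        _ ≤ (I ^ (α-1) * J ^ (-b)) * (I ^ (b - α) / (-(b - α))) :=
            mul_le_mul_of_nonneg_left hsum hc
        _ = I ^ (b-1) * J ^ (-b) / (α - b) := by
            rw [show (I ^ (α-1) * J ^ (-b)) * (I ^ (b - α) / (-(b - α)))
              = (I ^ (α-1) * I ^ (b - α)) * J ^ (-b) / (-(b-α)) by ring,
              rpow_collect hI0, show α - 1 + (b - α) = b - 1 by ring,
              show -(b - α) = α - b by ring]
    rw [hminIJ, hmaxIJ]
    calc ∑ v ∈ Finset.Ioc 0 N, F v ≤ ∑ v ∈ Finset.Ioc 0 M, F v := hsub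
      _ = ∑ v ∈ Finset.Ioc 0 (i:ℕ), F v + ∑ v ∈ Finset.Ioc (i:ℕ) M, F v := hsplit.symm
      _ ≤ I ^ (b-1) * J ^ (-b) / (α + b - 1) + I ^ (b-1) * J ^ (-b) / (α - b) :=
          add_le_add hp1 hp2
      _ = (1 / (α + b - 1) + 1 / (α - b)) * (I ^ (b-1) * J ^ (-b)) := by ring
  · -- case J < I
    have hJI : J < I := by rw [hI, hJ]; exact_mod_cast hij
    have hji : (j:ℕ) ≤ (i:ℕ) := le_of_lt hij
    have hminIJ : min I J = J := min_eq_right hJI.le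
    have hmaxIJ : max I J = I := max_eq_left hJI.le
    have hsplit1 : ∑ v ∈ Finset.Ioc 0 (j:ℕ), F v + ∑ v ∈ Finset.Ioc (j:ℕ) (i:ℕ), F v
        = ∑ v ∈ Finset.Ioc 0 (i:ℕ), F v :=
      Finset.sum_Ioc_consecutive F (Nat.zero_le _) hji
    have hsplit2 : ∑ v ∈ Finset.Ioc 0 (i:ℕ), F v + ∑ v ∈ Finset.Ioc (i:ℕ) M, F v
        = ∑ v ∈ Finset.Ioc 0 M, F v :=
      Finset.sum_Ioc_consecutive F (Nat.zero_le _) (le_max_right _ _)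
    set u : ℝ := I ^ (-α) * J ^ (α-1) with hu
    set w : ℝ := I ^ (-b) * J ^ (b-1) with hw
    have hun : (0:ℝ) ≤ u := by rw [hu]; positivity
    have hwn : (0:ℝ) ≤ w := by rw [hw]; positivity
    -- piece 1
    have hp1 : ∑ v ∈ Finset.Ioc 0 (j:ℕ), F v ≤ u / (α + b - 1) := by
      have hterm : ∀ v ∈ Finset.Ioc 0 (j:ℕ), F v
          = (I ^ (-α) * J ^ (-b)) * ((v:ℝ)) ^ ((α + b - 1) - 1) := by
        intro v hv
        simp only [Finset.mem_Ioc] at hv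
        have hv0 : (0:ℝ) < (v:ℝ) := by exact_mod_cast hv.1
        have hvJ : ((v:ℕ):ℝ) ≤ J := by rw [hJ]; exact_mod_cast hv.2
        have hvI : ((v:ℕ):ℝ) ≤ I := le_trans hvJ hJI.le
        rw [hF]
        simp only [min_eq_right hvI, max_eq_left hvI, min_eq_left hvJ, max_eq_right hvJ]
        rw [show (v:ℝ) ^ (α-1) * I ^ (-α) * ((v:ℝ) ^ (b-1) * J ^ (-b))
            = (I ^ (-α) * J ^ (-b)) * ((v:ℝ) ^ (α-1) * (v:ℝ) ^ (b-1)) by ring,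
          rpow_collect hv0, show α - 1 + (b-1) = α + b - 1 - 1 by ring]
      rw [Finset.sum_congr rfl hterm, ← Finset.mul_sum]
      have hsum := my_sum_pos hs0 hs1 0 (j:ℕ) (Nat.zero_le _)
      rw [Nat.cast_zero, Real.zero_rpow hs0.ne', sub_zero] at hsum
      have hc : (0:ℝ) ≤ I ^ (-α) * J ^ (-b) := by positivity
      calc (I ^ (-α) * J ^ (-b)) * ∑ v ∈ Finset.Ioc 0 (j:ℕ), ((v:ℝ)) ^ ((α + b - 1) - 1)
          ≤ (I ^ (-α) * J ^ (-b)) * (J ^ (α + b - 1) / (α + b - 1)) :=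
            mul_le_mul_of_nonneg_left hsum hc
        _ = u / (α + b - 1) := by
            rw [show (I ^ (-α) * J ^ (-b)) * (J ^ (α + b - 1) / (α + b - 1))
              = I ^ (-α) * (J ^ (-b) * J ^ (α + b - 1)) / (α + b - 1) by ring,
              rpow_collect hJ0, show -b + (α + b - 1) = α - 1 by ring, hu]
    -- piece 2
    have hp2 : ∑ v ∈ Finset.Ioc (j:ℕ) (i:ℕ), F v ≤ (w - u) / (α - b) := by
      have hterm : ∀ v ∈ Finset.Ioc (j:ℕ) (i:ℕ), F v
          = (I ^ (-α) * J ^ (b-1)) * ((v:ℝ)) ^ ((α - b) - 1) := by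
        intro v hv
        simp only [Finset.mem_Ioc] at hv
        have hvJ : J ≤ ((v:ℕ):ℝ) := by rw [hJ]; exact_mod_cast hv.1.le
        have hv0 : (0:ℝ) < (v:ℝ) := lt_of_lt_of_le hJ0 hvJ
        have hvI : ((v:ℕ):ℝ) ≤ I := by rw [hI]; exact_mod_cast hv.2
        rw [hF]
        simp only [min_eq_right hvI, max_eq_left hvI, min_eq_right hvJ, max_eq_left hvJ]
        rw [show (v:ℝ) ^ (α-1) * I ^ (-α) * (J ^ (b-1) * (v:ℝ) ^ (-b))
            = (I ^ (-α) * J ^ (b-1)) * ((v:ℝ) ^ (α-1) * (v:ℝ) ^ (-b)) by ring,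
          rpow_collect hv0, show α - 1 + -b = α - b - 1 by ring]
      rw [Finset.sum_congr rfl hterm, ← Finset.mul_sum]
      have hsum := my_sum_pos hq0 (show α - b ≤ 1 by linarith) (j:ℕ) (i:ℕ) hji
      have hc : (0:ℝ) ≤ I ^ (-α) * J ^ (b-1) := by positivity
      calc (I ^ (-α) * J ^ (b-1)) * ∑ v ∈ Finset.Ioc (j:ℕ) (i:ℕ), ((v:ℝ)) ^ ((α - b) - 1)
          ≤ (I ^ (-α) * J ^ (b-1)) * ((I ^ (α - b) - J ^ (α - b)) / (α - b)) :=
            mul_le_mul_of_nonneg_left hsum hc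
        _ = (w - u) / (α - b) := by
            rw [show (I ^ (-α) * J ^ (b-1)) * ((I ^ (α - b) - J ^ (α - b)) / (α - b))
              = ((I ^ (-α) * I ^ (α - b)) * J ^ (b-1)
                  - I ^ (-α) * (J ^ (b-1) * J ^ (α - b))) / (α - b) by ring,
              rpow_collect hI0, rpow_collect hJ0,
              show -α + (α - b) = -b by ring, show b - 1 + (α - b) = α - 1 by ring,
              hu, hw]
    -- piece 3
    have hp3 : ∑ v ∈ Finset.Ioc (i:ℕ) M, F v ≤ w / (α + b - 1) := by
      have hterm : ∀ v ∈ Finset.Ioc (i:ℕ) M, F v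
          = (I ^ (α-1) * J ^ (b-1)) * ((v:ℝ)) ^ ((1 - α - b) - 1) := by
        intro v hv
        simp only [Finset.mem_Ioc] at hv
        have hvI : I ≤ ((v:ℕ):ℝ) := by rw [hI]; exact_mod_cast hv.1.le
        have hv0 : (0:ℝ) < (v:ℝ) := lt_of_lt_of_le hI0 hvI
        have hvJ : J ≤ ((v:ℕ):ℝ) := le_trans hJI.le hvI
        rw [hF]
        simp only [min_eq_left hvI, max_eq_right hvI, min_eq_right hvJ, max_eq_left hvJ]
        rw [show I ^ (α-1) * (v:ℝ) ^ (-α) * (J ^ (b-1) * (v:ℝ) ^ (-b))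
            = (I ^ (α-1) * J ^ (b-1)) * ((v:ℝ) ^ (-α) * (v:ℝ) ^ (-b)) by ring,
          rpow_collect hv0, show -α + -b = 1 - α - b - 1 by ring]
      rw [Finset.sum_congr rfl hterm, ← Finset.mul_sum]
      have hsum := my_sum_neg (show 1 - α - b < 0 by linarith) i.pos M
      have hc : (0:ℝ) ≤ I ^ (α-1) * J ^ (b-1) := by positivity
      calc (I ^ (α-1) * J ^ (b-1)) * ∑ v ∈ Finset.Ioc (i:ℕ) M, ((v:ℝ)) ^ ((1 - α - b) - 1)
          ≤ (I ^ (α-1) * J ^ (b-1)) * (I ^ (1 - α - b) / (-(1 - α - b))) :=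
            mul_le_mul_of_nonneg_left hsum hc
        _ = w / (α + b - 1) := by
            rw [show (I ^ (α-1) * J ^ (b-1)) * (I ^ (1 - α - b) / (-(1 - α - b)))
              = ((I ^ (α-1) * I ^ (1 - α - b)) * J ^ (b-1)) / (-(1 - α - b)) by ring,
              rpow_collect hI0, show α - 1 + (1 - α - b) = -b by ring,
              show -(1 - α - b) = α + b - 1 by ring, hw]
    rw [hminIJ, hmaxIJ]
    have hus : u / (α + b - 1) ≤ u / (α - b) := by
      exact div_le_div_of_nonneg_left hun hq0 (by linarith)
    have hsubdiv : (w - u) / (α - b) = w / (α - b) - u / (α - b) := sub_div _ _ _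
    calc ∑ v ∈ Finset.Ioc 0 N, F v ≤ ∑ v ∈ Finset.Ioc 0 M, F v := hsub
      _ = ∑ v ∈ Finset.Ioc 0 (j:ℕ), F v + ∑ v ∈ Finset.Ioc (j:ℕ) (i:ℕ), F v
            + ∑ v ∈ Finset.Ioc (i:ℕ) M, F v := by rw [hsplit1, hsplit2]
      _ ≤ u / (α + b - 1) + (w - u) / (α - b) + w / (α + b - 1) :=
          add_le_add (add_le_add hp1 hp2) hp3
      _ ≤ (1 / (α + b - 1) + 1 / (α - b)) * (J ^ (b-1) * I ^ (-b)) := by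
          have hgoal : (1 / (α + b - 1) + 1 / (α - b)) * (J ^ (b-1) * I ^ (-b))
              = w / (α + b - 1) + w / (α - b) := by rw [hw]; ring
          rw [hgoal, hsubdiv]
          linarith

-- notation helpers
def Gre (α : ℝ) (x y : ℕ+) : ℝ :=
  (min ((x:ℕ):ℝ) ((y:ℕ):ℝ)) ^ (α-1) * (max ((x:ℕ):ℝ) ((y:ℕ):ℝ)) ^ (-α)

def Hre (b : ℝ) (x y : ℕ+) : ℝ :=
  (min ((x:ℕ):ℝ) ((y:ℕ):ℝ)) ^ (b-1) * (max ((x:ℕ):ℝ) ((y:ℕ):ℝ)) ^ (-b)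

lemma Gre_nonneg (α : ℝ) (x y : ℕ+) : 0 ≤ Gre α x y := by
  unfold Gre
  have h1 : (0:ℝ) ≤ min ((x:ℕ):ℝ) ((y:ℕ):ℝ) := le_min (Nat.cast_nonneg _) (Nat.cast_nonneg _)
  have h2 : (0:ℝ) ≤ max ((x:ℕ):ℝ) ((y:ℕ):ℝ) := le_max_of_le_left (Nat.cast_nonneg _)
  positivity

lemma Hre_nonneg (b : ℝ) (x y : ℕ+) : 0 ≤ Hre b x y := Gre_nonneg b x y

lemma gOne_eq (α : ℝ) (x y : ℕ+) : gOne α x y = ENNReal.ofReal (Gre α x y) := by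
  unfold gOne Gre
  rw [neg_sub]

-- finset version of my_key over ℕ+
lemma my_key_pnat (α b : ℝ) (h1 : 1/2 < α) (h2 : α < 1) (h3 : 1/2 < b) (h4 : b < α)
    (i j : ℕ+) (s : Finset ℕ+) :
    ∑ v ∈ s, Gre α i v * Hre b v j ≤ (1 / (α + b - 1) + 1 / (α - b)) * Hre b i j := by
  classical
  set gN : ℕ → ℝ := fun n =>
    (min ((i:ℕ):ℝ) ((n:ℕ):ℝ)) ^ (α-1) * (max ((i:ℕ):ℝ) ((n:ℕ):ℝ)) ^ (-α) *
      ((min ((n:ℕ):ℝ) ((j:ℕ):ℝ)) ^ (b-1) * (max ((n:ℕ):ℝ) ((j:ℕ):ℝ)) ^ (-b)) with hgN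
  have hgNnn : ∀ n : ℕ, 0 ≤ gN n := by
    intro n
    have e1 : (0:ℝ) ≤ min ((i:ℕ):ℝ) ((n:ℕ):ℝ) := le_min (Nat.cast_nonneg _) (Nat.cast_nonneg _)
    have e2 : (0:ℝ) ≤ max ((i:ℕ):ℝ) ((n:ℕ):ℝ) := le_max_of_le_left (Nat.cast_nonneg _)
    have e3 : (0:ℝ) ≤ min ((n:ℕ):ℝ) ((j:ℕ):ℝ) := le_min (Nat.cast_nonneg _) (Nat.cast_nonneg _)
    have e4 : (0:ℝ) ≤ max ((n:ℕ):ℝ) ((j:ℕ):ℝ) := le_max_of_le_left (Nat.cast_nonneg _)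
    rw [hgN]
    positivity
  have heq : ∑ v ∈ s, Gre α i v * Hre b v j = ∑ n ∈ s.image (fun v : ℕ+ => (v:ℕ)), gN n := by
    rw [Finset.sum_image (fun x _ y _ h => PNat.coe_injective h)]
    apply Finset.sum_congr rfl
    intro v _
    rw [hgN]
    unfold Gre Hre
    ring
  rw [heq]
  set N := s.sup (fun v : ℕ+ => (v:ℕ)) with hN
  have hsubset : s.image (fun v : ℕ+ => (v:ℕ)) ⊆ Finset.Ioc 0 N := by
    intro n hn
    rw [Finset.mem_image] at hn
    obtain ⟨v, hv, rfl⟩ := hn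
    rw [Finset.mem_Ioc]
    exact ⟨v.pos, Finset.le_sup hv⟩
  calc ∑ n ∈ s.image (fun v : ℕ+ => (v:ℕ)), gN n
      ≤ ∑ n ∈ Finset.Ioc 0 N, gN n :=
        Finset.sum_le_sum_of_subset_of_nonneg hsubset (fun n _ _ => hgNnn n)
    _ ≤ (1 / (α + b - 1) + 1 / (α - b)) * Hre b i j := my_key α b h1 h2 h3 h4 i j N

lemma tsum_ofReal_le {f : ℕ+ → ℝ} {S : ℝ} (hf : ∀ v, 0 ≤ f v)
    (hfin : ∀ s : Finset ℕ+, ∑ v ∈ s, f v ≤ S) :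
    ∑' v : ℕ+, ENNReal.ofReal (f v) ≤ ENNReal.ofReal S := by
  rw [ENNReal.tsum_eq_iSup_sum]
  apply iSup_le
  intro s
  rw [← ENNReal.ofReal_sum_of_nonneg (fun i _ => hf i)]
  exact ENNReal.ofReal_le_ofReal (hfin s)

-- base real inequality
lemma base_re (α b : ℝ) (h1 : 1/2 < α) (h2 : α < 1) (h3 : 1/2 < b) (h4 : b < α)
    (i j : ℕ+) :
    Gre α i j ≤ (1 / (α + b - 1) + 1 / (α - b)) * Hre b i j := by
  have hI1 : (1:ℝ) ≤ ((i:ℕ):ℝ) := by exact_mod_cast i.pos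
  have hJ1 : (1:ℝ) ≤ ((j:ℕ):ℝ) := by exact_mod_cast j.pos
  set m : ℝ := min ((i:ℕ):ℝ) ((j:ℕ):ℝ) with hm
  set M : ℝ := max ((i:ℕ):ℝ) ((j:ℕ):ℝ) with hM
  have hm1 : (1:ℝ) ≤ m := le_min hI1 hJ1
  have hm0 : (0:ℝ) < m := by linarith
  have hM0 : (0:ℝ) < M := lt_of_lt_of_le hm0 (min_le_max)
  have hs0 : (0:ℝ) < α + b - 1 := by linarith
  have hq0 : (0:ℝ) < α - b := by linarith
  have hGH : Gre α i j ≤ Hre b i j := by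
    unfold Gre Hre
    rw [← hm, ← hM]
    have e1 : m ^ (α-1) = m ^ (b-1) * m ^ (α-b) := by
      rw [rpow_collect hm0, show b - 1 + (α - b) = α - 1 by ring]
    have e2 : M ^ (-b) = M ^ (-α) * M ^ (α-b) := by
      rw [rpow_collect hM0, show -α + (α - b) = -b by ring]
    rw [e1, e2]
    have hmM : m ^ (α-b) ≤ M ^ (α-b) := Real.rpow_le_rpow hm0.le min_le_max (by linarith)
    have hnn : (0:ℝ) ≤ m ^ (b-1) * M ^ (-α) := by positivity
    nlinarith [hmM, hnn, Real.rpow_nonneg hm0.le (b-1), Real.rpow_nonneg hM0.le (-α)]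
  have hK1 : (1:ℝ) ≤ 1 / (α + b - 1) + 1 / (α - b) := by
    have e1 : (1:ℝ) ≤ 1 / (α + b - 1) := by
      rw [le_div_iff₀ hs0]; linarith
    have e2 : (0:ℝ) < 1 / (α - b) := by positivity
    linarith
  calc Gre α i j ≤ Hre b i j := hGH
    _ = 1 * Hre b i j := (one_mul _).symm
    _ ≤ (1 / (α + b - 1) + 1 / (α - b)) * Hre b i j :=
        mul_le_mul_of_nonneg_right hK1 (Hre_nonneg b i j)

lemma main' (α b : ℝ) (h1 : 1/2 < α) (h2 : α < 1) (h3 : 1/2 < b) (h4 : b < α) :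
    ∀ n : ℕ, ∀ i j : ℕ+,
      gIter α (n+1) i j
        ≤ ENNReal.ofReal ((1 / (α + b - 1) + 1 / (α - b)) ^ (n+1) * Hre b i j) := by
  set K : ℝ := 1 / (α + b - 1) + 1 / (α - b) with hK
  have hK0 : (0:ℝ) ≤ K := by
    have hs0 : (0:ℝ) < α + b - 1 := by linarith
    have hq0 : (0:ℝ) < α - b := by linarith
    rw [hK]; positivity
  intro n
  induction n with
  | zero =>
    intro i j
    have hbase : gIter α 1 i j = gOne α i j := by
      show (∑' v : ℕ+, gOne α i v * gIter α 0 v j) = gOne α i j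
      rw [tsum_eq_single j]
      · show gOne α i j * (if j = j then 1 else 0) = gOne α i j
        rw [if_pos rfl, mul_one]
      · intro v hv
        show gOne α i v * (if v = j then 1 else 0) = 0
        rw [if_neg hv, mul_zero]
    rw [hbase, gOne_eq, pow_one]
    exact ENNReal.ofReal_le_ofReal (base_re α b h1 h2 h3 h4 i j)
  | succ n ih =>
    intro i j
    have hstep : gIter α (n+2) i j = ∑' v : ℕ+, gOne α i v * gIter α (n+1) v j := rfl
    rw [hstep]
    have hterm : ∀ v : ℕ+, gOne α i v * gIter α (n+1) v j
        ≤ ENNReal.ofReal (K ^ (n+1) * (Gre α i v * Hre b v j)) := by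
      intro v
      calc gOne α i v * gIter α (n+1) v j
          ≤ ENNReal.ofReal (Gre α i v) * ENNReal.ofReal (K ^ (n+1) * Hre b v j) := by
            rw [gOne_eq]
            exact mul_le_mul_right (ih v j) _
        _ = ENNReal.ofReal (Gre α i v * (K ^ (n+1) * Hre b v j)) :=
            (ENNReal.ofReal_mul (Gre_nonneg α i v)).symm
        _ = ENNReal.ofReal (K ^ (n+1) * (Gre α i v * Hre b v j)) := by ring_nf
    calc ∑' v : ℕ+, gOne α i v * gIter α (n+1) v j
        ≤ ∑' v : ℕ+, ENNReal.ofReal (K ^ (n+1) * (Gre α i v * Hre b v j)) :=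
          ENNReal.tsum_le_tsum hterm
      _ ≤ ENNReal.ofReal (K ^ (n+1) * (K * Hre b i j)) := by
          apply tsum_ofReal_le
          · intro v
            have := Gre_nonneg α i v
            have := Hre_nonneg b v j
            positivity
          · intro s
            rw [← Finset.mul_sum]
            exact mul_le_mul_of_nonneg_left (my_key_pnat α b h1 h2 h3 h4 i j s)
              (pow_nonneg hK0 _)
      _ = ENNReal.ofReal (K ^ (n+2) * Hre b i j) := by rw [← mul_assoc, ← pow_succ]


/-- For `α ∈ (1/2,1)`, `b ∈ (1/2,α)` and `K_b = 1/(α+b−1) + 1/(α−b)`,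
for every `k ≥ 1` and positive integers `i, j` the iterated-kernel series converge and
`g_k(i,j) ≤ K_b^k (min i j)^{−(1−b)} (max i j)^{−b}`. -/
theorem stmt6 (α b : ℝ) (hα : α ∈ Set.Ioo (1 / 2 : ℝ) 1) (hb : b ∈ Set.Ioo (1 / 2 : ℝ) α) :
    ∀ k : ℕ, 1 ≤ k → ∀ i j : ℕ+,
      gIter α k i j ≤ ENNReal.ofReal
        ((1 / (α + b - 1) + 1 / (α - b)) ^ k *
          ((min ((i : ℕ) : ℝ) ((j : ℕ) : ℝ)) ^ (-(1 - b)) *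
            (max ((i : ℕ) : ℝ) ((j : ℕ) : ℝ)) ^ (-b))) := by
  intro k hk i j
  obtain ⟨n, rfl⟩ := Nat.exists_eq_add_of_le hk
  rw [add_comm 1 n]
  have := main' α b hα.1 hα.2 hb.1 hb.2 n i j
  simpa only [Hre, neg_sub] using this

end
end

section
/- For every ε > 0 there exists n₀ = n₀(ε) such that for all n ≥ n₀ and all distinct i, j ∈ [n]: ∑_{v ∈ [n] \ {i,j}} π_c(λ)² (1 − e^{−w_i w_v/ℓ_n})(1 − e^{−w_v w_j/ℓ_n}) ≤ (1+ε) λ² h(i,j), where the threshold n₀ does not depend on λ > 0 or on i, j. -/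
open MeasureTheory Real Filter
open scoped ENNReal NNReal

noncomputable section

/-- The weight `w_i = c_F (n/i)^α` of vertex `i ∈ [n]`. -/
def wFn (τ cF : ℝ) (n i : ℕ) : ℝ := cF * ((n : ℝ) / (i : ℝ)) ^ alphaOf τ

/-- The total weight `ℓ_n = ∑_{i ∈ [n]} w_i`. -/
def ellFn (τ cF : ℝ) (n : ℕ) : ℝ := ∑ i ∈ Finset.Icc 1 n, wFn τ cF n i

/-- The critical percolation probability `π_c(λ) = λ n^{−(3−τ)/2}`. -/
def piC (τ lam : ℝ) (n : ℕ) : ℝ := lam * (n : ℝ) ^ (-((3 - τ) / 2))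

-- ===== helper lemmas =====
private lemma one_sub_exp_neg_nonneg {t : ℝ} (ht : 0 ≤ t) : 0 ≤ 1 - Real.exp (-t) := by
  have h : Real.exp (-t) ≤ 1 := by
    rw [← Real.exp_zero]; exact Real.exp_le_exp.mpr (by linarith)
  linarith

private lemma one_sub_exp_neg_le {t : ℝ} : 1 - Real.exp (-t) ≤ t := by
  have := Real.add_one_le_exp (-t); linarith

private lemma f_nonneg {α a x : ℝ} (ha : 0 ≤ a) (hx : 0 ≤ x) :
    0 ≤ (1 - Real.exp (-(a * x ^ (-α)))) * x ^ (-α) :=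
  mul_nonneg (one_sub_exp_neg_nonneg (mul_nonneg ha (Real.rpow_nonneg hx _)))
    (Real.rpow_nonneg hx _)

private lemma f_anti {α a x y : ℝ} (hα : 0 < α) (ha : 0 ≤ a) (hx : 0 < x) (hxy : x ≤ y) :
    (1 - Real.exp (-(a * y ^ (-α)))) * y ^ (-α)
      ≤ (1 - Real.exp (-(a * x ^ (-α)))) * x ^ (-α) := by
  have hy : 0 < y := lt_of_lt_of_le hx hxy
  have h1 : y ^ (-α) ≤ x ^ (-α) := Real.rpow_le_rpow_of_nonpos hx hxy (by linarith)
  have h2 : (0:ℝ) ≤ y ^ (-α) := Real.rpow_nonneg hy.le _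
  have h3 : Real.exp (-(a * x ^ (-α))) ≤ Real.exp (-(a * y ^ (-α))) :=
    Real.exp_le_exp.mpr (by nlinarith)
  exact mul_le_mul (by linarith) h1 h2
    (one_sub_exp_neg_nonneg (mul_nonneg ha (Real.rpow_nonneg hx.le _)))

private lemma f_contOn {α a : ℝ} :
    ContinuousOn (fun x : ℝ => (1 - Real.exp (-(a * x ^ (-α)))) * x ^ (-α)) (Set.Ioi 0) := by
  have hc : ContinuousOn (fun x : ℝ => x ^ (-α)) (Set.Ioi 0) := fun x hx =>
    (Real.continuousAt_rpow_const x (-α) (Or.inl (ne_of_gt hx))).continuousWithinAt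
  exact (continuousOn_const.sub
    (Real.continuous_exp.comp_continuousOn ((continuousOn_const.mul hc).neg))).mul hc

private lemma f_integrable {α a : ℝ} (hα : 1/2 < α) (hα1 : α < 1) (ha : 0 ≤ a) :
    IntegrableOn (fun x : ℝ => (1 - Real.exp (-(a * x ^ (-α)))) * x ^ (-α)) (Set.Ioi 0) := by
  have hα0 : (0:ℝ) < α := by linarith
  rw [← Set.Ioc_union_Ioi_eq_Ioi (zero_le_one (α := ℝ))]
  apply IntegrableOn.union
  · have hg : IntegrableOn (fun x : ℝ => x ^ (-α)) (Set.Ioc (0:ℝ) 1) := by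
      have h := intervalIntegral.intervalIntegrable_rpow' (a := 0) (b := 1)
        (r := -α) (by linarith)
      rwa [intervalIntegrable_iff, Set.uIoc_of_le zero_le_one] at h
    apply Integrable.mono hg
      ((f_contOn.mono Set.Ioc_subset_Ioi_self).aestronglyMeasurable measurableSet_Ioc)
    refine (MeasureTheory.ae_restrict_iff' measurableSet_Ioc).mpr
      (Filter.Eventually.of_forall fun x hx => ?_)
    rw [Real.norm_eq_abs, Real.norm_eq_abs, abs_of_nonneg (f_nonneg ha hx.1.le),
      abs_of_nonneg (Real.rpow_nonneg hx.1.le _)]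
    have h1 : 1 - Real.exp (-(a * x ^ (-α))) ≤ 1 := by
      have := Real.exp_pos (-(a * x ^ (-α))); linarith
    exact mul_le_of_le_one_left (Real.rpow_nonneg hx.1.le _) h1
  · have hg : IntegrableOn (fun x : ℝ => a * x ^ (-(2*α))) (Set.Ioi (1:ℝ)) :=
      (integrableOn_Ioi_rpow_of_lt (by linarith) one_pos).const_mul a
    apply Integrable.mono hg
      ((f_contOn.mono (Set.Ioi_subset_Ioi zero_le_one)).aestronglyMeasurable measurableSet_Ioi)
    refine (MeasureTheory.ae_restrict_iff' measurableSet_Ioi).mpr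
      (Filter.Eventually.of_forall fun x hx => ?_)
    have hx0 : (0:ℝ) < x := lt_trans one_pos hx
    have hxx : x ^ (-α) * x ^ (-α) = x ^ (-(2*α)) := by
      rw [← Real.rpow_add hx0]; ring_nf
    rw [Real.norm_eq_abs, Real.norm_eq_abs, abs_of_nonneg (f_nonneg ha hx0.le)]
    have h2 : (0:ℝ) ≤ a * x ^ (-(2*α)) := mul_nonneg ha (Real.rpow_nonneg hx0.le _)
    rw [abs_of_nonneg h2]
    calc (1 - Real.exp (-(a * x ^ (-α)))) * x ^ (-α)
        ≤ (a * x ^ (-α)) * x ^ (-α) :=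
          mul_le_mul_of_nonneg_right one_sub_exp_neg_le (Real.rpow_nonneg hx0.le _)
      _ = a * x ^ (-(2*α)) := by rw [mul_assoc, hxx]

private lemma f_int_one {α : ℝ} (hα0 : 0 < α) :
    ∫ x in Set.Ioi (0:ℝ), (1 - Real.exp (-(x ^ (-α)))) * x ^ (-α)
      = (1/α) * ∫ z in Set.Ioi (0:ℝ), (1 - Real.exp (-z)) * z ^ (-(1/α)) := by
  have hp : (-α) ≠ 0 := by linarith
  have key := MeasureTheory.integral_comp_rpow_Ioi
    (fun z => (1/α) * ((1 - Real.exp (-z)) * z ^ (-(1/α)))) hp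
  rw [MeasureTheory.integral_const_mul] at key
  rw [← key]
  apply MeasureTheory.setIntegral_congr_fun measurableSet_Ioi
  intro x hx
  have hx0 : (0:ℝ) < x := hx
  have h1 : (x ^ (-α)) ^ (-(1/α)) = x := by
    rw [← Real.rpow_mul hx0.le]
    have : (-α) * -(1/α) = 1 := by field_simp
    rw [this, Real.rpow_one]
  have h2 : x ^ (-α - 1) * x = x ^ (-α) := by
    nth_rewrite 2 [← Real.rpow_one x]
    rw [← Real.rpow_add hx0]; ring_nf
  simp only [smul_eq_mul, h1]
  rw [abs_of_neg (by linarith : (-α) < 0)]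
  field_simp
  rw [← h2]; ring

private lemma f_integral {α a : ℝ} (hα0 : 0 < α) (ha : 0 < a) :
    ∫ x in Set.Ioi (0:ℝ), (1 - Real.exp (-(a * x ^ (-α)))) * x ^ (-α)
      = a ^ ((1-α)/α) *
        ((1/α) * ∫ z in Set.Ioi (0:ℝ), (1 - Real.exp (-z)) * z ^ (-(1/α))) := by
  have hb : (0:ℝ) < a ^ (α⁻¹) := Real.rpow_pos_of_pos ha _
  have hcomp := MeasureTheory.integral_comp_mul_left_Ioi
    (fun x => (1 - Real.exp (-(a * x ^ (-α)))) * x ^ (-α)) 0 hb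
  simp only [mul_zero, smul_eq_mul] at hcomp
  have heq : ∀ x ∈ Set.Ioi (0:ℝ),
      (1 - Real.exp (-(a * (a ^ (α⁻¹) * x) ^ (-α)))) * (a ^ (α⁻¹) * x) ^ (-α)
        = a⁻¹ * ((1 - Real.exp (-(x ^ (-α)))) * x ^ (-α)) := by
    intro x hx
    have hx0 : (0:ℝ) < x := hx
    have h1 : (a ^ (α⁻¹) * x) ^ (-α) = a⁻¹ * x ^ (-α) := by
      rw [Real.mul_rpow hb.le hx0.le, ← Real.rpow_mul ha.le]
      have : α⁻¹ * (-α) = -1 := by field_simp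
      rw [this, Real.rpow_neg_one]
    rw [h1]
    have h2 : a * (a⁻¹ * x ^ (-α)) = x ^ (-α) := by field_simp
    rw [h2]; ring
  rw [MeasureTheory.setIntegral_congr_fun measurableSet_Ioi heq,
    MeasureTheory.integral_const_mul] at hcomp
  have h3 : ∫ x in Set.Ioi (0:ℝ), (1 - Real.exp (-(a * x ^ (-α)))) * x ^ (-α)
      = a ^ (α⁻¹) * (a⁻¹ *
        ∫ x in Set.Ioi (0:ℝ), (1 - Real.exp (-(x ^ (-α)))) * x ^ (-α)) := by
    rw [hcomp]; field_simp
  rw [h3, f_int_one hα0]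
  have h4 : a ^ (α⁻¹) * a⁻¹ = a ^ ((1-α)/α) := by
    rw [← Real.rpow_neg_one a, ← Real.rpow_add ha]
    congr 1; field_simp; ring
  rw [← mul_assoc, h4]

private lemma icc_eq_ioc (n : ℕ) : Finset.Icc 1 n = Finset.Ioc 0 n := by
  ext x; simp [Finset.mem_Icc, Finset.mem_Ioc]; omega

private lemma sum_f_le {α a : ℝ} (hα : 1/2 < α) (hα1 : α < 1) (ha : 0 ≤ a) (n : ℕ) :
    ∑ v ∈ Finset.Icc 1 n, (1 - Real.exp (-(a * (v:ℝ) ^ (-α)))) * (v:ℝ) ^ (-α)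
      ≤ ∫ x in Set.Ioi (0:ℝ), (1 - Real.exp (-(a * x ^ (-α)))) * x ^ (-α) := by
  have hα0 : (0:ℝ) < α := by linarith
  have hint := f_integrable hα hα1 ha
  rw [icc_eq_ioc]
  have step : ∀ m : ℕ,
      ∑ v ∈ Finset.Ioc 0 m, (1 - Real.exp (-(a * (v:ℝ) ^ (-α)))) * (v:ℝ) ^ (-α)
        ≤ ∫ x in Set.Ioc (0:ℝ) (m:ℝ), (1 - Real.exp (-(a * x ^ (-α)))) * x ^ (-α) := by
    intro m
    induction m with
    | zero => simp
    | succ k ih =>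
      rw [Finset.sum_Ioc_succ_top (Nat.zero_le k)]
      have hk0 : (0:ℝ) ≤ (k:ℝ) := Nat.cast_nonneg k
      have hcast : ((k+1 : ℕ) : ℝ) = (k:ℝ) + 1 := by push_cast; ring
      have union : Set.Ioc (0:ℝ) ((k:ℝ)+1) = Set.Ioc 0 (k:ℝ) ∪ Set.Ioc (k:ℝ) ((k:ℝ)+1) :=
        (Set.Ioc_union_Ioc_eq_Ioc hk0 (by linarith)).symm
      have hsub1 : Set.Ioc (0:ℝ) (k:ℝ) ⊆ Set.Ioi 0 := Set.Ioc_subset_Ioi_self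
      have hsub2 : Set.Ioc ((k:ℝ)) ((k:ℝ)+1) ⊆ Set.Ioi 0 := fun x hx =>
        lt_of_le_of_lt hk0 hx.1
      rw [hcast, union, MeasureTheory.setIntegral_union (Set.disjoint_left.mpr fun x (h1 : x ∈ Set.Ioc (0:ℝ) (k:ℝ))
        (h2 : x ∈ Set.Ioc (k:ℝ) ((k:ℝ)+1)) => absurd h2.1 (not_lt.mpr h1.2))
        measurableSet_Ioc (hint.mono_set hsub1) (hint.mono_set hsub2)]
      refine add_le_add ih ?_
      have hconst := MeasureTheory.setIntegral_ge_of_const_le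
        (c := (1 - Real.exp (-(a * (((k:ℕ)+1:ℕ):ℝ) ^ (-α)))) * (((k:ℕ)+1:ℕ):ℝ) ^ (-α))
        (s := Set.Ioc ((k:ℝ)) ((k:ℝ)+1)) measurableSet_Ioc
        (by rw [Real.volume_Ioc]; exact ENNReal.ofReal_ne_top)
        (fun x hx => by
          rw [hcast]
          exact f_anti hα0 ha (lt_of_le_of_lt hk0 hx.1) hx.2)
        (hint.mono_set hsub2)
      have hvol : volume.real (Set.Ioc ((k:ℝ)) ((k:ℝ)+1)) = 1 := by
        rw [measureReal_def, Real.volume_Ioc]; simp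
      rw [hvol, one_smul, hcast] at hconst
      exact hconst
  refine le_trans (step n) (MeasureTheory.setIntegral_mono_set hint ?_ ?_)
  · exact (MeasureTheory.ae_restrict_iff' measurableSet_Ioi).mpr
      (Filter.Eventually.of_forall fun x hx => f_nonneg ha (le_of_lt hx))
  · exact Filter.Eventually.of_forall fun x hx => Set.Ioc_subset_Ioi_self hx

private lemma sum_rpow_lb {α : ℝ} (hα0 : 0 < α) (hα1 : α < 1) (n : ℕ) :
    ((n:ℝ)+1) ^ (1-α) - 1 ≤ (1-α) * ∑ i ∈ Finset.Icc 1 n, (i:ℝ) ^ (-α) := by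
  rw [icc_eq_ioc]
  induction n with
  | zero => simp
  | succ k ih =>
    rw [Finset.sum_Ioc_succ_top (Nat.zero_le k)]
    have hm : (0:ℝ) < (k:ℝ)+1 := by positivity
    have hcast : ((k+1 : ℕ) : ℝ) = (k:ℝ) + 1 := by push_cast; ring
    have key : ((k:ℝ)+1+1) ^ (1-α) ≤ ((k:ℝ)+1) ^ (1-α) + (1-α) * ((k:ℝ)+1) ^ (-α) := by
      have h1 : ((k:ℝ)+1+1) = ((k:ℝ)+1) * (1 + 1/((k:ℝ)+1)) := by field_simp
      have hpos : (0:ℝ) ≤ 1 + 1/((k:ℝ)+1) := by positivity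
      rw [h1, Real.mul_rpow hm.le hpos]
      have h2 : (1 + 1/((k:ℝ)+1)) ^ (1-α) ≤ 1 + (1-α) * (1/((k:ℝ)+1)) := by
        have h0 : (0:ℝ) ≤ 1/((k:ℝ)+1) := by positivity
        exact rpow_one_add_le_one_add_mul_self (by linarith) (by linarith) (by linarith)
      have h3 : ((k:ℝ)+1) ^ (1-α) * (1/((k:ℝ)+1)) = ((k:ℝ)+1) ^ (-α) := by
        rw [show (1:ℝ)/((k:ℝ)+1) = ((k:ℝ)+1)^(-1:ℝ) from by rw [Real.rpow_neg_one]; field_simp,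
          ← Real.rpow_add hm]
        ring_nf
      calc ((k:ℝ)+1) ^ (1-α) * (1 + 1/((k:ℝ)+1)) ^ (1-α)
          ≤ ((k:ℝ)+1) ^ (1-α) * (1 + (1-α) * (1/((k:ℝ)+1))) :=
            mul_le_mul_of_nonneg_left h2 (Real.rpow_nonneg hm.le _)
        _ = ((k:ℝ)+1) ^ (1-α) + (1-α) * (((k:ℝ)+1) ^ (1-α) * (1/((k:ℝ)+1))) := by ring
        _ = ((k:ℝ)+1) ^ (1-α) + (1-α) * ((k:ℝ)+1) ^ (-α) := by rw [h3]
    rw [hcast, mul_add]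
    linarith

/-- For every `ε > 0` there is `n₀ = n₀(ε)` (independent of `λ`, `i`, `j`)
such that for all `n ≥ n₀`, `λ > 0` and distinct `i, j ∈ [n]`:
`∑_{v ∈ [n] \ {i,j}} π_c(λ)² (1 − e^{−w_i w_v/ℓ_n})(1 − e^{−w_v w_j/ℓ_n}) ≤ (1+ε) λ² h(i,j)`. -/
theorem stmt7 (τ cF : ℝ) (hτ : τ ∈ Set.Ioo (2 : ℝ) 3) (hcF : 0 < cF)
    (ε : ℝ) (hε : 0 < ε) :
    ∃ n₀ : ℕ, ∀ n : ℕ, n₀ ≤ n → ∀ lam : ℝ, 0 < lam →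
      ∀ i ∈ Finset.Icc 1 n, ∀ j ∈ Finset.Icc 1 n, i ≠ j →
        ∑ v ∈ Finset.Icc 1 n \ {i, j},
            piC τ lam n ^ 2 *
              (1 - Real.exp (-(wFn τ cF n i * wFn τ cF n v / ellFn τ cF n))) *
              (1 - Real.exp (-(wFn τ cF n v * wFn τ cF n j / ellFn τ cF n)))
          ≤ (1 + ε) * lam ^ 2 * hOf τ cF (i : ℝ) (j : ℝ) := by
  obtain ⟨hτ2, hτ3⟩ := hτ
  have hτ1 : (0:ℝ) < τ - 1 := by linarith
  set α := alphaOf τ with hαdef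
  have hα1 : α < 1 := by
    rw [hαdef, alphaOf, div_lt_one hτ1]; linarith
  have hα12 : 1/2 < α := by
    rw [hαdef, alphaOf, lt_div_iff₀ hτ1]; linarith
  have hα0 : (0:ℝ) < α := by linarith
  have hατ : α * (τ - 1) = 1 := by rw [hαdef, alphaOf]; field_simp
  have hμeq : muOf τ cF = cF / (1-α) := by rw [muOf, ← hαdef]
  have hμ : 0 < muOf τ cF := by rw [hμeq]; exact div_pos hcF (by linarith)
  have hA0 : 0 ≤ AalphaOf τ := by
    rw [AalphaOf]
    apply MeasureTheory.setIntegral_nonneg measurableSet_Ioi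
    intro z hz
    exact mul_nonneg (one_sub_exp_neg_nonneg (le_of_lt hz))
      (Real.rpow_nonneg (le_of_lt hz) _)
  have hAint : (∫ z in Set.Ioi (0:ℝ), (1 - Real.exp (-z)) * z ^ (-(1/α))) = AalphaOf τ := by
    rw [AalphaOf, ← hαdef]
  set c1 := (1+ε) ^ α with hc1def
  have hc1 : 1 < c1 := by
    rw [hc1def, Real.one_lt_rpow_iff_of_pos (by linarith)]
    exact Or.inl ⟨by linarith, hα0⟩
  have hc1pos : (0:ℝ) < c1 := by linarith
  -- choose n₀
  have htend : Tendsto (fun n : ℕ => (n:ℝ) ^ (-(1-α))) atTop (nhds 0) :=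
    (tendsto_rpow_neg_atTop (by linarith : (0:ℝ) < 1-α)).comp tendsto_natCast_atTop_atTop
  have hpos' : (0:ℝ) < 1 - 1/c1 := by
    have : 1/c1 < 1 := by rw [div_lt_one hc1pos]; linarith
    linarith
  have hev : ∀ᶠ n : ℕ in atTop, (n:ℝ) ^ (-(1-α)) ≤ 1 - 1/c1 :=
    (Filter.Tendsto.eventually_lt_const hpos' htend).mono fun n h => le_of_lt h
  obtain ⟨n₀, hn₀⟩ := Filter.eventually_atTop.mp (hev.and (Filter.eventually_ge_atTop 1))
  refine ⟨n₀, fun n hn lam hlam i hi j hj hij => ?_⟩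
  obtain ⟨hbound, hn1⟩ := hn₀ n hn
  rw [Finset.mem_Icc] at hi hj
  set N : ℝ := (n:ℝ) with hNdef
  have hN1 : (1:ℝ) ≤ N := by rw [hNdef]; exact_mod_cast hn1
  have hN0 : (0:ℝ) < N := by linarith
  -- weights
  have hw : ∀ v : ℕ, 1 ≤ v → wFn τ cF n v = cF * N ^ α * (v:ℝ) ^ (-α) := by
    intro v hv
    have hv0 : (0:ℝ) < (v:ℝ) := by exact_mod_cast hv
    rw [wFn, ← hαdef, Real.div_rpow hN0.le hv0.le, Real.rpow_neg hv0.le]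
    ring
  have hℓpos : 0 < ellFn τ cF n := by
    rw [ellFn]
    apply Finset.sum_pos
    · intro v hv
      rw [Finset.mem_Icc] at hv
      have hv0 : (0:ℝ) < (v:ℝ) := by exact_mod_cast hv.1
      rw [wFn, ← hαdef]
      exact mul_pos hcF (Real.rpow_pos_of_pos (div_pos hN0 hv0) _)
    · exact ⟨1, Finset.mem_Icc.mpr ⟨le_refl 1, hn1⟩⟩
  -- lower bound on ℓ_n
  set S := ∑ v ∈ Finset.Icc 1 n, (v:ℝ) ^ (-α) with hSdef
  have hell_eq : ellFn τ cF n = cF * N ^ α * S := by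
    rw [ellFn, hSdef, Finset.mul_sum]
    apply Finset.sum_congr rfl
    intro v hv
    rw [Finset.mem_Icc] at hv
    exact hw v hv.1
  have hNαpos : 0 < N ^ α := Real.rpow_pos_of_pos hN0 _
  have h7 : N ^ α * N ^ (1-α) = N := by
    rw [← Real.rpow_add hN0, show α + (1-α) = 1 by ring, Real.rpow_one]
  have hS : N ^ (1-α) - 1 ≤ (1-α) * S := by
    have hsum := sum_rpow_lb hα0 hα1 n
    have h6 : N ^ (1-α) ≤ (N+1) ^ (1-α) :=
      Real.rpow_le_rpow hN0.le (by linarith) (by linarith)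
    rw [hSdef]
    calc N ^ (1-α) - 1 ≤ (N+1) ^ (1-α) - 1 := by linarith
      _ ≤ (1-α) * ∑ v ∈ Finset.Icc 1 n, (v:ℝ) ^ (-α) := hsum
  have hkey : (1-α) * (muOf τ cF * (N - N ^ α)) = cF * N ^ α * (N ^ (1-α) - 1) := by
    rw [hμeq]
    have hne : (1:ℝ) - α ≠ 0 := by linarith
    rw [← mul_assoc, show (1-α)*(cF/(1-α)) = cF by field_simp]
    linear_combination (-cF) * h7
  have hℓlb : muOf τ cF * (N - N ^ α) ≤ ellFn τ cF n := by
    have h8 : (1-α) * (muOf τ cF * (N - N ^ α)) ≤ (1-α) * (cF * N ^ α * S) := by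
      rw [hkey]
      calc cF * N ^ α * (N ^ (1-α) - 1) ≤ cF * N ^ α * ((1-α) * S) :=
          mul_le_mul_of_nonneg_left hS (by positivity)
        _ = (1-α) * (cF * N ^ α * S) := by ring
    rw [hell_eq]
    exact le_of_mul_le_mul_left h8 (by linarith)
  have h9 : N ^ (-(1-α)) * N = N ^ α := by
    nth_rewrite 2 [← Real.rpow_one N]
    rw [← Real.rpow_add hN0]; ring_nf
  have h10 : N / c1 ≤ N - N ^ α := by
    have hb2 : N ^ α ≤ (1 - 1/c1) * N := by
      rw [← h9]
      exact mul_le_mul_of_nonneg_right hbound hN0.le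
    have he : N / c1 = N - (1-1/c1)*N := by field_simp; ring
    rw [he]; linarith
  have hμN : muOf τ cF * N ≤ c1 * ellFn τ cF n := by
    have he : muOf τ cF * N = c1 * (muOf τ cF * (N/c1)) := by
      field_simp
    rw [he]
    calc c1 * (muOf τ cF * (N/c1)) ≤ c1 * (muOf τ cF * (N - N^α)) := by
          apply mul_le_mul_of_nonneg_left _ hc1pos.le
          exact mul_le_mul_of_nonneg_left h10 hμ.le
      _ ≤ c1 * ellFn τ cF n := mul_le_mul_of_nonneg_left hℓlb hc1pos.le
  -- core estimate
  clear hev htend hn₀ hbound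
  have hiR1 : (1:ℝ) ≤ (i:ℝ) := by exact_mod_cast hi.1
  have hjR1 : (1:ℝ) ≤ (j:ℝ) := by exact_mod_cast hj.1
  have hm0 : (0:ℝ) < min (i:ℝ) (j:ℝ) := lt_of_lt_of_le one_pos (le_min hiR1 hjR1)
  have hM0 : (0:ℝ) < max (i:ℝ) (j:ℝ) := lt_of_lt_of_le one_pos (le_max_of_le_left hiR1)
  set K := cF^2 * N^(2*α) / ellFn τ cF n with hKdef
  have hK : 0 < K := by
    rw [hKdef]
    exact div_pos (by positivity) hℓpos
  have hw2 : ∀ u v : ℕ, 1 ≤ u → 1 ≤ v →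
      wFn τ cF n u * wFn τ cF n v / ellFn τ cF n
        = (K * (u:ℝ)^(-α)) * (v:ℝ)^(-α) := by
    intro u v hu hv
    have hNN : N^α * N^α = N^(2*α) := by rw [← Real.rpow_add hN0]; ring_nf
    rw [hw u hu, hw v hv, hKdef]
    field_simp
    rw [show α * 2 = 2 * α by ring]; linear_combination hNN
  have hP : (0:ℝ) ≤ piC τ lam n ^ 2 := sq_nonneg _
  set aR := K * (min (i:ℝ) (j:ℝ))^(-α) with haRdef
  set cR := K * (max (i:ℝ) (j:ℝ))^(-α) with hcRdef
  have haR : 0 < aR := mul_pos hK (Real.rpow_pos_of_pos hm0 _)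
  have hcR : 0 < cR := mul_pos hK (Real.rpow_pos_of_pos hM0 _)
  have hterm : ∀ v ∈ Finset.Icc 1 n \ ({i, j} : Finset ℕ),
      piC τ lam n ^ 2 *
          (1 - Real.exp (-(wFn τ cF n i * wFn τ cF n v / ellFn τ cF n))) *
          (1 - Real.exp (-(wFn τ cF n v * wFn τ cF n j / ellFn τ cF n)))
        ≤ piC τ lam n ^ 2 *
            (cR * ((1 - Real.exp (-(aR * (v:ℝ)^(-α)))) * (v:ℝ)^(-α))) := by
    intro v hv
    have hv1 : 1 ≤ v := (Finset.mem_Icc.mp (Finset.mem_sdiff.mp hv).1).1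
    have hv0 : (0:ℝ) < (v:ℝ) := by exact_mod_cast hv1
    have hvα : (0:ℝ) ≤ (v:ℝ)^(-α) := Real.rpow_nonneg hv0.le _
    rw [hw2 i v hi.1 hv1, hw2 v j hv1 hj.1]
    rcases le_total i j with hij' | hij'
    · have hmin : min (i:ℝ) (j:ℝ) = (i:ℝ) := min_eq_left (by exact_mod_cast hij')
      have hmax : max (i:ℝ) (j:ℝ) = (j:ℝ) := max_eq_right (by exact_mod_cast hij')
      rw [haRdef, hcRdef, hmin, hmax]
      have hrw : (K * (v:ℝ)^(-α)) * (j:ℝ)^(-α) = (K * (j:ℝ)^(-α)) * (v:ℝ)^(-α) := by ring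
      rw [hrw]
      have hX : (0:ℝ) ≤ 1 - Real.exp (-((K * (i:ℝ)^(-α)) * (v:ℝ)^(-α))) :=
        one_sub_exp_neg_nonneg (by positivity)
      calc piC τ lam n ^ 2 * (1 - Real.exp (-((K * (i:ℝ)^(-α)) * (v:ℝ)^(-α)))) *
              (1 - Real.exp (-((K * (j:ℝ)^(-α)) * (v:ℝ)^(-α))))
          ≤ piC τ lam n ^ 2 * (1 - Real.exp (-((K * (i:ℝ)^(-α)) * (v:ℝ)^(-α)))) *
              ((K * (j:ℝ)^(-α)) * (v:ℝ)^(-α)) :=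
            mul_le_mul_of_nonneg_left one_sub_exp_neg_le (mul_nonneg hP hX)
        _ = piC τ lam n ^ 2 * ((K * (j:ℝ)^(-α)) *
              ((1 - Real.exp (-((K * (i:ℝ)^(-α)) * (v:ℝ)^(-α)))) * (v:ℝ)^(-α))) := by ring
    · have hmin : min (i:ℝ) (j:ℝ) = (j:ℝ) := min_eq_right (by exact_mod_cast hij')
      have hmax : max (i:ℝ) (j:ℝ) = (i:ℝ) := max_eq_left (by exact_mod_cast hij')
      rw [haRdef, hcRdef, hmin, hmax]
      have hrw : (K * (v:ℝ)^(-α)) * (j:ℝ)^(-α) = (K * (j:ℝ)^(-α)) * (v:ℝ)^(-α) := by ring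
      rw [hrw]
      have hX : (0:ℝ) ≤ 1 - Real.exp (-((K * (j:ℝ)^(-α)) * (v:ℝ)^(-α))) :=
        one_sub_exp_neg_nonneg (by positivity)
      calc piC τ lam n ^ 2 * (1 - Real.exp (-((K * (i:ℝ)^(-α)) * (v:ℝ)^(-α)))) *
              (1 - Real.exp (-((K * (j:ℝ)^(-α)) * (v:ℝ)^(-α))))
          ≤ piC τ lam n ^ 2 * ((K * (i:ℝ)^(-α)) * (v:ℝ)^(-α)) *
              (1 - Real.exp (-((K * (j:ℝ)^(-α)) * (v:ℝ)^(-α)))) := by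
            apply mul_le_mul_of_nonneg_right _ hX
            exact mul_le_mul_of_nonneg_left one_sub_exp_neg_le hP
        _ = piC τ lam n ^ 2 * ((K * (i:ℝ)^(-α)) *
              ((1 - Real.exp (-((K * (j:ℝ)^(-α)) * (v:ℝ)^(-α)))) * (v:ℝ)^(-α))) := by ring
  -- sum it up
  have hsum2 : ∑ v ∈ Finset.Icc 1 n \ ({i, j} : Finset ℕ),
        piC τ lam n ^ 2 *
          (cR * ((1 - Real.exp (-(aR * (v:ℝ)^(-α)))) * (v:ℝ)^(-α)))
      ≤ piC τ lam n ^ 2 * (cR * (aR ^ ((1-α)/α) * ((1/α) * AalphaOf τ))) := by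
    calc ∑ v ∈ Finset.Icc 1 n \ ({i, j} : Finset ℕ),
          piC τ lam n ^ 2 * (cR * ((1 - Real.exp (-(aR * (v:ℝ)^(-α)))) * (v:ℝ)^(-α)))
        ≤ ∑ v ∈ Finset.Icc 1 n,
          piC τ lam n ^ 2 * (cR * ((1 - Real.exp (-(aR * (v:ℝ)^(-α)))) * (v:ℝ)^(-α))) := by
          apply Finset.sum_le_sum_of_subset_of_nonneg Finset.sdiff_subset
          intro v hv _
          exact mul_nonneg hP (mul_nonneg hcR.le (f_nonneg haR.le (Nat.cast_nonneg v)))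
      _ = piC τ lam n ^ 2 * (cR *
            ∑ v ∈ Finset.Icc 1 n, (1 - Real.exp (-(aR * (v:ℝ)^(-α)))) * (v:ℝ)^(-α)) := by
          rw [← Finset.mul_sum, ← Finset.mul_sum]
      _ ≤ piC τ lam n ^ 2 * (cR * (aR ^ ((1-α)/α) * ((1/α) * AalphaOf τ))) := by
          apply mul_le_mul_of_nonneg_left _ hP
          apply mul_le_mul_of_nonneg_left _ hcR.le
          calc ∑ v ∈ Finset.Icc 1 n, (1 - Real.exp (-(aR * (v:ℝ)^(-α)))) * (v:ℝ)^(-α)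
              ≤ ∫ x in Set.Ioi (0:ℝ), (1 - Real.exp (-(aR * x^(-α)))) * x^(-α) :=
                sum_f_le hα12 hα1 haR.le n
            _ = aR ^ ((1-α)/α) * ((1/α) * AalphaOf τ) := by
                rw [f_integral hα0 haR, hAint]
  refine le_trans (le_trans (Finset.sum_le_sum hterm) hsum2) ?_
  -- final arithmetic
  have e_P : piC τ lam n ^ 2 = lam^2 * N^(τ-3) := by
    rw [piC, ← hNdef, mul_pow, ← Real.rpow_natCast (N ^ (-((3-τ)/2))) 2,
      ← Real.rpow_mul hN0.le]
    norm_num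
  have e_a : aR ^ ((1-α)/α) = K^((1-α)/α) * (min (i:ℝ) (j:ℝ)) ^ (-(1-α)) := by
    rw [haRdef, Real.mul_rpow hK.le (Real.rpow_nonneg hm0.le _),
      ← Real.rpow_mul hm0.le]
    congr 2
    field_simp
  have e_K : N^(τ-3) * (K * K^((1-α)/α)) = (cF^2 * N / ellFn τ cF n) ^ (1/α) := by
    have hKK : K * K^((1-α)/α) = K^(1/α) := by
      nth_rewrite 1 [← Real.rpow_one K]
      rw [← Real.rpow_add hK]
      congr 1
      field_simp; ring
    have hN3 : N^(τ-3) = (N^((τ-3)*α))^(1/α) := by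
      rw [← Real.rpow_mul hN0.le]
      congr 1
      field_simp
    have hNN2 : N^((τ-3)*α) * N^(2*α) = N := by
      rw [← Real.rpow_add hN0, show (τ-3)*α + 2*α = α*(τ-1) by ring, hατ, Real.rpow_one]
    rw [hKK, hN3, ← Real.mul_rpow (Real.rpow_nonneg hN0.le _) hK.le]
    congr 1
    rw [hKdef]
    field_simp
    rw [show α * 2 = 2 * α by ring]; linear_combination hNN2
  have e_B : hOf τ cF (i:ℝ) (j:ℝ)
      = cF^(2/α) * AalphaOf τ / (α * muOf τ cF ^ (1/α))
        * (min (i:ℝ) (j:ℝ)) ^ (-(1-α)) * (max (i:ℝ) (j:ℝ)) ^ (-α) := by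
    rw [hOf, BalphaOf, ← hαdef]
  have hfinal : (cF^2 * N / ellFn τ cF n) ^ (1/α)
      ≤ (1+ε) * (cF^(2/α) / muOf τ cF ^ (1/α)) := by
    have hrhs : (1+ε) * (cF^(2/α) / muOf τ cF ^ (1/α)) = (c1 * (cF^2/muOf τ cF))^(1/α) := by
      rw [Real.mul_rpow hc1pos.le (le_of_lt (div_pos (by positivity) hμ)),
        Real.div_rpow (by positivity) hμ.le]
      congr 1
      · rw [hc1def, ← Real.rpow_mul (by linarith : (0:ℝ) ≤ 1+ε),
          show α * (1/α) = 1 by field_simp, Real.rpow_one]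
      · rw [← Real.rpow_natCast cF 2, ← Real.rpow_mul hcF.le]
        congr 1
        push_cast
        field_simp
    rw [hrhs]
    apply Real.rpow_le_rpow (by positivity) _ (by positivity)
    rw [show c1 * (cF^2/muOf τ cF) = (c1 * cF^2)/muOf τ cF by ring,
      div_le_div_iff₀ hℓpos hμ]
    have h12 := mul_le_mul_of_nonneg_left hμN (sq_nonneg cF)
    calc cF^2 * N * muOf τ cF = cF^2 * (muOf τ cF * N) := by ring
      _ ≤ cF^2 * (c1 * ellFn τ cF n) := h12
      _ = c1 * cF^2 * ellFn τ cF n := by ring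
  have hX : (0:ℝ) ≤ lam^2 * AalphaOf τ * (1/α)
      * (min (i:ℝ) (j:ℝ)) ^ (-(1-α)) * (max (i:ℝ) (j:ℝ)) ^ (-α) := by
    apply mul_nonneg
    apply mul_nonneg
    apply mul_nonneg
    apply mul_nonneg (sq_nonneg lam) hA0
    · positivity
    · exact Real.rpow_nonneg hm0.le _
    · exact Real.rpow_nonneg hM0.le _
  calc piC τ lam n ^ 2 * (cR * (aR ^ ((1-α)/α) * ((1/α) * AalphaOf τ)))
      = (lam^2 * AalphaOf τ * (1/α)
            * (min (i:ℝ) (j:ℝ)) ^ (-(1-α)) * (max (i:ℝ) (j:ℝ)) ^ (-α))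
          * (N^(τ-3) * (K * K^((1-α)/α))) := by
        rw [e_P, e_a, hcRdef]; ring
    _ = (lam^2 * AalphaOf τ * (1/α)
            * (min (i:ℝ) (j:ℝ)) ^ (-(1-α)) * (max (i:ℝ) (j:ℝ)) ^ (-α))
          * ((cF^2 * N / ellFn τ cF n) ^ (1/α)) := by rw [e_K]
    _ ≤ (lam^2 * AalphaOf τ * (1/α)
            * (min (i:ℝ) (j:ℝ)) ^ (-(1-α)) * (max (i:ℝ) (j:ℝ)) ^ (-α))
          * ((1+ε) * (cF^(2/α) / muOf τ cF ^ (1/α))) :=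
        mul_le_mul_of_nonneg_left hfinal hX
    _ = (1 + ε) * lam ^ 2 * hOf τ cF (i:ℝ) (j:ℝ) := by
        rw [e_B]; ring
end
end

section
/- Fix a > 0 and a positive integer i. With w_k = c_F (n/k)^α for k ∈ [n] and ℓ_n = ∑_{k∈[n]} w_k, the following limits hold as n → ∞: (i) #{k ∈ [n] : w_k ≥ a ℓ_n/w_i} / (n (c_F w_i/(a ℓ_n))^{τ−1}) → 1; (ii) (∑_{k∈[n]: w_k > a ℓ_n/w_i} w_k) / ((c_F^{τ−1} n/(1−α)) (w_i/(a ℓ_n))^{τ−2}) → 1; (iii) (∑_{k∈[n]: w_k ≤ a ℓ_n/w_i} w_k²) / ((c_F^{τ−1} n/(2α−1)) (a ℓ_n/w_i)^{3−τ}) → 1. -/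
open MeasureTheory Real Filter Topology
open scoped ENNReal NNReal

noncomputable section

namespace Stmt9Aux

lemma intInt {r A B : ℝ} (hA : 0 < A) (hAB : A ≤ B) :
    IntervalIntegrable (fun x : ℝ => x ^ r) volume A B := by
  apply intervalIntegral.intervalIntegrable_rpow
  right
  rw [Set.uIcc_of_le hAB, Set.mem_Icc]
  rintro ⟨h1, _⟩
  linarith

lemma step_le {r k : ℝ} (hr : r < 0) (hk : 1 ≤ k) :
    ∫ x in k..(k+1), x ^ r ≤ k ^ r := by
  have hk0 : (0:ℝ) < k := by linarith
  calc ∫ x in k..(k+1), x ^ r ≤ ∫ _ in k..(k+1), k ^ r := by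
        apply intervalIntegral.integral_mono_on (by linarith) (intInt hk0 (by linarith))
          intervalIntegrable_const
        intro x hx
        exact (Real.rpow_le_rpow_iff_of_neg (by linarith [hx.1] : (0:ℝ) < x) hk0 hr).mpr hx.1
    _ = k ^ r := by simp

lemma le_step {r k : ℝ} (hr : r < 0) (hk : 1 ≤ k) :
    (k+1) ^ r ≤ ∫ x in k..(k+1), x ^ r := by
  have hk0 : (0:ℝ) < k := by linarith
  calc (k+1) ^ r = ∫ _ in k..(k+1), (k+1) ^ r := by simp
    _ ≤ ∫ x in k..(k+1), x ^ r := by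
        apply intervalIntegral.integral_mono_on (by linarith) intervalIntegrable_const
          (intInt hk0 (by linarith))
        intro x hx
        exact (Real.rpow_le_rpow_iff_of_neg (by linarith : (0:ℝ) < k+1) (by linarith [hx.1] : (0:ℝ) < x) hr).mpr hx.2

lemma sum_rpow_le {r : ℝ} (hr : r < 0) {m n : ℕ} (hm : 1 ≤ m) (hmn : m ≤ n) :
    ∑ k ∈ Finset.Icc m n, (k:ℝ) ^ r ≤ (m:ℝ) ^ r + ∫ x in (m:ℝ)..(n:ℝ), x ^ r := by
  have hm0 : (0:ℝ) < m := by exact_mod_cast hm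
  induction n, hmn using Nat.le_induction with
  | base => simp
  | succ n hmn ih =>
      have h1n : (1:ℝ) ≤ (n:ℝ) := by exact_mod_cast hm.trans hmn
      have hcast : ((n+1 : ℕ) : ℝ) = (n:ℝ) + 1 := by push_cast; ring
      rw [Finset.sum_Icc_succ_top (hmn.trans (Nat.le_succ n))]
      have hadj : (∫ x in (m:ℝ)..(n:ℝ), x ^ r) + ∫ x in (n:ℝ)..((n:ℝ)+1), x ^ r
          = ∫ x in (m:ℝ)..((n:ℝ)+1), x ^ r :=
        intervalIntegral.integral_add_adjacent_intervals
          (intInt hm0 (by exact_mod_cast hmn)) (intInt (by linarith) (by linarith))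
      have hstep := le_step hr h1n
      rw [hcast]
      linarith [ih]

lemma le_sum_rpow {r : ℝ} (hr : r < 0) {m n : ℕ} (hm : 1 ≤ m) (hmn : m ≤ n) :
    (∫ x in (m:ℝ)..(n:ℝ), x ^ r) ≤ ∑ k ∈ Finset.Icc m n, (k:ℝ) ^ r := by
  have hm0 : (0:ℝ) < m := by exact_mod_cast hm
  have key : ∀ n' : ℕ, m ≤ n' → (∫ x in (m:ℝ)..((n':ℝ)+1), x ^ r) ≤ ∑ k ∈ Finset.Icc m n', (k:ℝ) ^ r := by
    intro n' hmn'
    induction n', hmn' using Nat.le_induction with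
    | base => simpa using step_le hr (by exact_mod_cast hm : (1:ℝ) ≤ (m:ℝ))
    | succ n' hmn' ih =>
        have h1n : (1:ℝ) ≤ (n':ℝ) := by exact_mod_cast hm.trans hmn'
        have hcast : ((n'+1 : ℕ) : ℝ) = (n':ℝ) + 1 := by push_cast; ring
        rw [Finset.sum_Icc_succ_top (hmn'.trans (Nat.le_succ n')), hcast]
        have hadj : (∫ x in (m:ℝ)..((n':ℝ)+1), x ^ r) + ∫ x in ((n':ℝ)+1)..((n':ℝ)+1+1), x ^ r
            = ∫ x in (m:ℝ)..((n':ℝ)+1+1), x ^ r :=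
          intervalIntegral.integral_add_adjacent_intervals
            (intInt hm0 (by push_cast; linarith [(by exact_mod_cast hmn' : (m:ℝ) ≤ (n':ℝ))]))
            (intInt (by linarith) (by linarith))
        have hstep := step_le hr (by linarith : (1:ℝ) ≤ (n':ℝ)+1)
        linarith
  have h2 := key n hmn
  have hnn : (∫ x in (n:ℝ)..((n:ℝ)+1), x ^ r) ≥ 0 := by
    apply intervalIntegral.integral_nonneg (by linarith)
    intro x hx
    have : (0:ℝ) < m := hm0
    have hxn : (0:ℝ) ≤ x := by
      have := hx.1
      have : (1:ℝ) ≤ (n:ℝ) := by exact_mod_cast hm.trans hmn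
      linarith [hx.1]
    exact Real.rpow_nonneg hxn r
  have hadj : (∫ x in (m:ℝ)..(n:ℝ), x ^ r) + ∫ x in (n:ℝ)..((n:ℝ)+1), x ^ r
      = ∫ x in (m:ℝ)..((n:ℝ)+1), x ^ r :=
    intervalIntegral.integral_add_adjacent_intervals
      (intInt hm0 (by exact_mod_cast hmn))
      (intInt (lt_of_lt_of_le hm0 (by exact_mod_cast hmn)) (by linarith))
  linarith

lemma integral_eval {r A B : ℝ} (hr : r ≠ -1) (hA : 0 < A) (hAB : A ≤ B) :
    ∫ x in A..B, x ^ r = (B ^ (r+1) - A ^ (r+1)) / (r+1) := by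
  apply integral_rpow
  right
  refine ⟨hr, ?_⟩
  rw [Set.uIcc_of_le hAB, Set.mem_Icc]
  rintro ⟨h1, _⟩
  linarith

lemma limS {q : ℝ} (h0 : 0 < q) (h1 : q < 1) :
    Tendsto (fun m : ℕ => (∑ k ∈ Finset.Icc 1 m, (k:ℝ) ^ (-q)) / (m:ℝ) ^ (1-q))
      atTop (𝓝 (1/(1-q))) := by
  have h1q : 0 < 1 - q := by linarith
  have hq1 : -q ≠ -1 := by intro h; apply absurd (neg_injective h); linarith
  have hpow : Tendsto (fun m : ℕ => ((m:ℝ) ^ (1-q))⁻¹) atTop (𝓝 0) :=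
    ((tendsto_rpow_atTop h1q).comp tendsto_natCast_atTop_atTop).inv_tendsto_atTop
  have hlow : Tendsto (fun m : ℕ => 1/(1-q) * (1 - ((m:ℝ) ^ (1-q))⁻¹)) atTop (𝓝 (1/(1-q))) := by
    have := (tendsto_const_nhds (x := (1:ℝ)) (f := atTop (α := ℕ))).sub hpow
    simpa using (this.const_mul (1/(1-q)))
  have hup : Tendsto (fun m : ℕ => 1/(1-q) * (1 - ((m:ℝ) ^ (1-q))⁻¹) + ((m:ℝ) ^ (1-q))⁻¹)
      atTop (𝓝 (1/(1-q))) := by simpa using hlow.add hpow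
  apply tendsto_of_tendsto_of_tendsto_of_le_of_le' hlow hup
  · filter_upwards [eventually_ge_atTop 1] with m hm
    have hm0 : (0:ℝ) < m := by exact_mod_cast hm
    have hmp : (0:ℝ) < (m:ℝ) ^ (1-q) := Real.rpow_pos_of_pos hm0 _
    have hint : ∫ x in (1:ℝ)..(m:ℝ), x ^ (-q) = ((m:ℝ) ^ (1-q) - 1) / (1-q) := by
      have := integral_eval (r := -q) hq1 one_pos (by exact_mod_cast hm : (1:ℝ) ≤ (m:ℝ))
      rw [this, Real.one_rpow]; ring_nf
    have hlo := le_sum_rpow (by linarith : -q < 0) (le_refl 1) hm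
    rw [Nat.cast_one] at hlo
    rw [hint] at hlo
    calc 1/(1-q) * (1 - ((m:ℝ) ^ (1-q))⁻¹) = (((m:ℝ) ^ (1-q) - 1) / (1-q)) / (m:ℝ) ^ (1-q) := by
          field_simp
      _ ≤ (∑ k ∈ Finset.Icc 1 m, (k:ℝ) ^ (-q)) / (m:ℝ) ^ (1-q) := by gcongr
  · filter_upwards [eventually_ge_atTop 1] with m hm
    have hm0 : (0:ℝ) < m := by exact_mod_cast hm
    have hmp : (0:ℝ) < (m:ℝ) ^ (1-q) := Real.rpow_pos_of_pos hm0 _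
    have hint : ∫ x in (1:ℝ)..(m:ℝ), x ^ (-q) = ((m:ℝ) ^ (1-q) - 1) / (1-q) := by
      have := integral_eval (r := -q) hq1 one_pos (by exact_mod_cast hm : (1:ℝ) ≤ (m:ℝ))
      rw [this, Real.one_rpow]; ring_nf
    have hhi := sum_rpow_le (by linarith : -q < 0) (le_refl 1) hm
    rw [Nat.cast_one, hint, Real.one_rpow] at hhi
    calc (∑ k ∈ Finset.Icc 1 m, (k:ℝ) ^ (-q)) / (m:ℝ) ^ (1-q)
        ≤ (1 + ((m:ℝ) ^ (1-q) - 1) / (1-q)) / (m:ℝ) ^ (1-q) := by gcongr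
      _ = 1/(1-q) * (1 - ((m:ℝ) ^ (1-q))⁻¹) + ((m:ℝ) ^ (1-q))⁻¹ := by
          field_simp; ring

end Stmt9Aux
open Stmt9Aux

set_option maxHeartbeats 2000000 in
/-- With `w_k = c_F (n/k)^α` and `ℓ_n = ∑_{k∈[n]} w_k`, for fixed `a > 0`
and a fixed positive integer `i`, as `n → ∞`:
(i) `#{k ∈ [n] : w_k ≥ a ℓ_n/w_i} ∼ n (c_F w_i/(a ℓ_n))^{τ−1}`;
(ii) `∑_{k : w_k > a ℓ_n/w_i} w_k ∼ (c_F^{τ−1} n/(1−α)) (w_i/(a ℓ_n))^{τ−2}`;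
(iii) `∑_{k : w_k ≤ a ℓ_n/w_i} w_k² ∼ (c_F^{τ−1} n/(2α−1)) (a ℓ_n/w_i)^{3−τ}`. -/
theorem stmt9 (τ cF : ℝ) (hτ : τ ∈ Set.Ioo (2 : ℝ) 3) (hcF : 0 < cF)
    (a : ℝ) (ha : 0 < a) (i : ℕ) (hi : 1 ≤ i) :
    Tendsto
      (fun n : ℕ =>
        (((Finset.Icc 1 n).filter
            (fun k => a * ellFn τ cF n / wFn τ cF n i ≤ wFn τ cF n k)).card : ℝ) /
          ((n : ℝ) * (cF * wFn τ cF n i / (a * ellFn τ cF n)) ^ (τ - 1)))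
      atTop (nhds 1)
    ∧ Tendsto
        (fun n : ℕ =>
          (∑ k ∈ (Finset.Icc 1 n).filter
              (fun k => a * ellFn τ cF n / wFn τ cF n i < wFn τ cF n k), wFn τ cF n k) /
            ((cF ^ (τ - 1) * (n : ℝ) / (1 - alphaOf τ)) *
              (wFn τ cF n i / (a * ellFn τ cF n)) ^ (τ - 2)))
        atTop (nhds 1)
    ∧ Tendsto
        (fun n : ℕ =>
          (∑ k ∈ (Finset.Icc 1 n).filter
              (fun k => wFn τ cF n k ≤ a * ellFn τ cF n / wFn τ cF n i), wFn τ cF n k ^ 2) /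
            ((cF ^ (τ - 1) * (n : ℝ) / (2 * alphaOf τ - 1)) *
              (a * ellFn τ cF n / wFn τ cF n i) ^ (3 - τ)))
        atTop (nhds 1) := by
  obtain ⟨hτ2, hτ3⟩ := hτ
  have hτ1 : (0:ℝ) < τ - 1 := by linarith
  have hα : alphaOf τ = 1/(τ-1) := rfl
  set α := alphaOf τ with hαdef
  have hα0 : 0 < α := by rw [hα]; positivity
  have hατ : α * (τ-1) = 1 := by rw [hα]; field_simp
  have hα1 : α < 1 := by rw [hα, div_lt_one hτ1]; linarith
  have hα2 : 1 < 2*α := by nlinarith [hατ]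
  have h1α : (0:ℝ) < 1 - α := by linarith
  have h2α1 : (0:ℝ) < 2*α - 1 := by linarith
  have h3τ : (0:ℝ) < 3 - τ := by linarith
  have hi0 : (0:ℝ) < (i:ℝ) := by exact_mod_cast hi
  set w : ℕ → ℕ → ℝ := wFn τ cF with hwdef
  set L : ℕ → ℝ := ellFn τ cF with hLdef
  set b : ℕ → ℝ := fun n => a * L n / w n i with hbdef
  set X : ℕ → ℝ := fun n => (n:ℝ) * (cF * w n i / (a * L n)) ^ (τ-1) with hXdef
  -- basic identities
  have hwk : ∀ n k : ℕ, 1 ≤ n → 1 ≤ k → w n k = cF * (n:ℝ)^α * (k:ℝ)^(-α) := by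
    intro n k hn hk
    have hn0 : (0:ℝ) < n := by exact_mod_cast hn
    have hk0 : (0:ℝ) < k := by exact_mod_cast hk
    rw [hwdef]
    show cF * ((n:ℝ)/(k:ℝ))^α = _
    rw [Real.div_rpow hn0.le hk0.le, Real.rpow_neg hk0.le]
    ring
  have hwpos : ∀ n k : ℕ, 1 ≤ n → 1 ≤ k → 0 < w n k := by
    intro n k hn hk
    have hn0 : (0:ℝ) < n := by exact_mod_cast hn
    have hk0 : (0:ℝ) < k := by exact_mod_cast hk
    rw [hwk n k hn hk]; positivity
  have hLsum : ∀ n : ℕ, 1 ≤ n →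
      L n = cF * (n:ℝ)^α * ∑ k ∈ Finset.Icc 1 n, (k:ℝ)^(-α) := by
    intro n hn
    rw [hLdef]
    show (∑ k ∈ Finset.Icc 1 n, w n k) = _
    rw [Finset.mul_sum]
    exact Finset.sum_congr rfl fun k hk => hwk n k hn (Finset.mem_Icc.mp hk).1
  have hSpos : ∀ n : ℕ, 1 ≤ n → 0 < ∑ k ∈ Finset.Icc 1 n, (k:ℝ)^(-α) := by
    intro n hn
    apply Finset.sum_pos
    · intro k hk
      have hk0 : (0:ℝ) < k := by exact_mod_cast (Finset.mem_Icc.mp hk).1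
      positivity
    · exact ⟨1, Finset.mem_Icc.mpr ⟨le_refl 1, hn⟩⟩
  have hLpos : ∀ n : ℕ, 1 ≤ n → 0 < L n := by
    intro n hn
    have hn0 : (0:ℝ) < n := by exact_mod_cast hn
    rw [hLsum n hn]
    have := hSpos n hn
    positivity
  have hbpos : ∀ n : ℕ, 1 ≤ n → 0 < b n := by
    intro n hn
    simp only [hbdef]
    exact div_pos (mul_pos ha (hLpos n hn)) (hwpos n i hn hi)
  have hcFb : ∀ n : ℕ, 1 ≤ n → cF * w n i / (a * L n) = cF / b n := by
    intro n hn
    simp only [hbdef]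
    rw [div_div_eq_mul_div]
  have hXpos : ∀ n : ℕ, 1 ≤ n → 0 < X n := by
    intro n hn
    have hn0 : (0:ℝ) < n := by exact_mod_cast hn
    simp only [hXdef]
    have h1 : 0 < cF * w n i / (a * L n) :=
      div_pos (mul_pos hcF (hwpos n i hn hi)) (mul_pos ha (hLpos n hn))
    positivity
  have hXpow : ∀ n : ℕ, 1 ≤ n → (X n)^α = (n:ℝ)^α * (cF / b n) := by
    intro n hn
    have hn0 : (0:ℝ) < n := by exact_mod_cast hn
    have ht : 0 < cF / b n := div_pos hcF (hbpos n hn)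
    simp only [hXdef]
    rw [hcFb n hn, Real.mul_rpow hn0.le (Real.rpow_nonneg ht.le _),
      ← Real.rpow_mul ht.le, mul_comm (τ-1) α, hατ, Real.rpow_one]
  have hWX : ∀ n k : ℕ, 1 ≤ n → 1 ≤ k → w n k = b n * (X n / (k:ℝ))^α := by
    intro n k hn hk
    have hk0 : (0:ℝ) < k := by exact_mod_cast hk
    have hX0 := hXpos n hn
    have hb0 := hbpos n hn
    rw [Real.div_rpow hX0.le hk0.le, hXpow n hn, hwk n k hn hk,
      Real.rpow_neg hk0.le]
    field_simp
  have hle2 : ∀ n k : ℕ, 1 ≤ n → 1 ≤ k → (b n ≤ w n k ↔ (k:ℝ) ≤ X n) := by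
    intro n k hn hk
    have hk0 : (0:ℝ) < k := by exact_mod_cast hk
    have hX0 := hXpos n hn
    rw [hWX n k hn hk, le_mul_iff_one_le_right (hbpos n hn), ← Real.one_rpow α,
      Real.rpow_le_rpow_iff zero_le_one (by positivity) hα0, one_le_div hk0]
  have hle3 : ∀ n k : ℕ, 1 ≤ n → 1 ≤ k → (w n k ≤ b n ↔ X n ≤ (k:ℝ)) := by
    intro n k hn hk
    have hk0 : (0:ℝ) < k := by exact_mod_cast hk
    have hX0 := hXpos n hn
    rw [hWX n k hn hk, mul_le_iff_le_one_right (hbpos n hn), ← Real.one_rpow α,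
      Real.rpow_le_rpow_iff (by positivity) zero_le_one hα0, div_le_one hk0]
  have hlt2 : ∀ n k : ℕ, 1 ≤ n → 1 ≤ k → (b n < w n k ↔ (k:ℝ) < X n) := by
    intro n k hn hk
    rw [← not_le, ← not_le]
    exact not_congr (hle3 n k hn hk)
  -- Tendsto facts
  have hnat : Tendsto (fun n : ℕ => (n:ℝ)) atTop atTop := tendsto_natCast_atTop_atTop
  have hrpow_pos : ∀ e : ℝ, 0 < e → Tendsto (fun n : ℕ => (n:ℝ)^e) atTop atTop :=
    fun e he => (tendsto_rpow_atTop he).comp hnat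
  have TS : Tendsto (fun m : ℕ => (∑ k ∈ Finset.Icc 1 m, (k:ℝ)^(-α)) / (m:ℝ)^(1-α))
      atTop (𝓝 (1/(1-α))) := limS hα0 hα1
  have T1 : Tendsto (fun n : ℕ => L n / n) atTop (𝓝 (cF * (1/(1-α)))) := by
    apply (TS.const_mul cF).congr'
    filter_upwards [eventually_ge_atTop 1] with n hn
    have hn0 : (0:ℝ) < n := by exact_mod_cast hn
    have hnn : (n:ℝ)^α * (n:ℝ)^(1-α) = (n:ℝ) := by
      rw [← Real.rpow_add hn0, show α + (1-α) = 1 by ring, Real.rpow_one]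
    have hp1 : (0:ℝ) < (n:ℝ)^(1-α) := Real.rpow_pos_of_pos hn0 _
    have hp2 : (0:ℝ) < (n:ℝ)^α := Real.rpow_pos_of_pos hn0 _
    have hdiv : (n:ℝ) / (n:ℝ)^(1-α) = (n:ℝ)^α := by rw [div_eq_iff hp1.ne']; exact hnn.symm
    rw [hLsum n hn, eq_div_iff hn0.ne']
    calc cF * ((∑ k ∈ Finset.Icc 1 n, (k:ℝ)^(-α)) / (n:ℝ)^(1-α)) * n
        = cF * (∑ k ∈ Finset.Icc 1 n, (k:ℝ)^(-α)) * ((n:ℝ) / (n:ℝ)^(1-α)) := by ring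
      _ = cF * (n:ℝ)^α * ∑ k ∈ Finset.Icc 1 n, (k:ℝ)^(-α) := by rw [hdiv]; ring
  have T2 : Tendsto (fun n : ℕ => b n * (n:ℝ)^(α-1)) atTop
      (𝓝 (a * (i:ℝ)^α / cF * (cF * (1/(1-α))))) := by
    apply (T1.const_mul (a * (i:ℝ)^α / cF)).congr'
    filter_upwards [eventually_ge_atTop 1] with n hn
    have hn0 : (0:ℝ) < n := by exact_mod_cast hn
    have hp2 : (0:ℝ) < (n:ℝ)^α := Real.rpow_pos_of_pos hn0 _
    have hia : (0:ℝ) < (i:ℝ)^α := Real.rpow_pos_of_pos hi0 _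
    simp only [hbdef]
    rw [hwk n i hn hi, Real.rpow_sub hn0, Real.rpow_one, Real.rpow_neg hi0.le]
    field_simp
  set Lb : ℝ := a * (i:ℝ)^α / cF * (cF * (1/(1-α))) with hLbdef
  have hLbpos : 0 < Lb := by
    have hia : (0:ℝ) < (i:ℝ)^α := Real.rpow_pos_of_pos hi0 _
    rw [hLbdef]; positivity
  have T3 : Tendsto b atTop atTop := by
    apply Tendsto.congr' _ (Tendsto.pos_mul_atTop hLbpos T2 (hrpow_pos (1-α) h1α))
    filter_upwards [eventually_ge_atTop 1] with n hn
    have hn0 : (0:ℝ) < n := by exact_mod_cast hn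
    have hnn : (n:ℝ)^(α-1) * (n:ℝ)^(1-α) = 1 := by
      rw [← Real.rpow_add hn0, show (α-1) + (1-α) = 0 by ring, Real.rpow_zero]
    calc b n * (n:ℝ)^(α-1) * (n:ℝ)^(1-α) = b n * ((n:ℝ)^(α-1) * (n:ℝ)^(1-α)) := by ring
      _ = b n := by rw [hnn, mul_one]
  have T4 : Tendsto (fun n : ℕ => X n / n) atTop (𝓝 0) := by
    have h0 : Tendsto (fun n : ℕ => (cF / b n) ^ (τ-1)) atTop (𝓝 0) := by
      have h1 : Tendsto (fun n : ℕ => cF / b n) atTop (𝓝 0) :=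
        Tendsto.div_atTop tendsto_const_nhds T3
      have := h1.rpow_const (p := τ-1) (Or.inr hτ1.le)
      rwa [Real.zero_rpow hτ1.ne'] at this
    apply h0.congr'
    filter_upwards [eventually_ge_atTop 1] with n hn
    have hn0 : (0:ℝ) < n := by exact_mod_cast hn
    simp only [hXdef]
    rw [hcFb n hn, mul_comm, mul_div_assoc, div_self hn0.ne', mul_one]
  have TnX : Tendsto (fun n : ℕ => (n:ℝ) / X n) atTop atTop := by
    have h1 : Tendsto (fun n : ℕ => X n / n) atTop (𝓝[>] 0) := by
      apply tendsto_nhdsWithin_of_tendsto_nhds_of_eventually_within _ T4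
      filter_upwards [eventually_ge_atTop 1] with n hn
      have hn0 : (0:ℝ) < n := by exact_mod_cast hn
      exact div_pos (hXpos n hn) hn0
    have := h1.inv_tendsto_nhdsGT_zero
    apply this.congr
    intro n
    simp [inv_div]
  have T5 : Tendsto X atTop atTop := by
    have hC : (0:ℝ) < (cF / Lb) ^ (τ-1) := Real.rpow_pos_of_pos (div_pos hcF hLbpos) _
    have hc : Tendsto (fun n : ℕ => (cF / (b n * (n:ℝ)^(α-1))) ^ (τ-1)) atTop
        (𝓝 ((cF / Lb) ^ (τ-1))) := by
      have h1 : Tendsto (fun n : ℕ => cF / (b n * (n:ℝ)^(α-1))) atTop (𝓝 (cF / Lb)) :=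
        tendsto_const_nhds.div T2 hLbpos.ne'
      exact h1.rpow_const (Or.inl (div_pos hcF hLbpos).ne')
    apply Tendsto.congr' _ (Tendsto.atTop_mul_pos hC (hrpow_pos (3-τ) h3τ) hc)
    filter_upwards [eventually_ge_atTop 1] with n hn
    have hn0 : (0:ℝ) < n := by exact_mod_cast hn
    have hb0 := hbpos n hn
    have hcb : 0 < cF / b n := div_pos hcF hb0
    have e1 : cF / (b n * (n:ℝ)^(α-1)) = (cF / b n) * (n:ℝ)^(1-α) := by
      rw [← div_div, div_eq_mul_inv (cF / b n), ← Real.rpow_neg hn0.le,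
        show -(α-1) = 1-α by ring]
    have e2 : (cF / (b n * (n:ℝ)^(α-1))) ^ (τ-1) = (cF / b n)^(τ-1) * (n:ℝ)^(τ-2) := by
      rw [e1, Real.mul_rpow hcb.le (Real.rpow_nonneg hn0.le _), ← Real.rpow_mul hn0.le]
      congr 2
      linear_combination -hατ
    rw [e2]
    simp only [hXdef]
    rw [hcFb n hn]
    have e3 : (n:ℝ)^(3-τ) * (n:ℝ)^(τ-2) = (n:ℝ) := by
      rw [← Real.rpow_add hn0, show (3-τ) + (τ-2) = 1 by ring, Real.rpow_one]
    calc (n:ℝ)^(3-τ) * ((cF / b n)^(τ-1) * (n:ℝ)^(τ-2))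
        = ((n:ℝ)^(3-τ) * (n:ℝ)^(τ-2)) * (cF / b n)^(τ-1) := by ring
      _ = (n:ℝ) * (cF / b n)^(τ-1) := by rw [e3]
  have EvX2 : ∀ᶠ n : ℕ in atTop, 2 ≤ X n := T5.eventually_ge_atTop 2
  have EvXn : ∀ᶠ n : ℕ in atTop, X n + 1 ≤ (n:ℝ) := by
    filter_upwards [T4.eventually_lt_const (by norm_num : (0:ℝ) < 1/4),
      eventually_ge_atTop 2] with n h1 h2
    have hn0 : (2:ℝ) ≤ (n:ℝ) := by exact_mod_cast h2
    have := (div_lt_iff₀ (by linarith : (0:ℝ) < (n:ℝ))).mp h1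
    linarith
  have partI : Tendsto
      (fun n : ℕ => (((Finset.Icc 1 n).filter (fun k => b n ≤ w n k)).card : ℝ) / X n)
      atTop (𝓝 1) := by
    have cardEq : ∀ᶠ n : ℕ in atTop,
        ((((Finset.Icc 1 n).filter (fun k => b n ≤ w n k)).card : ℕ) : ℝ) = (⌊X n⌋₊ : ℝ) := by
      filter_upwards [eventually_ge_atTop 1, EvX2, EvXn] with n hn hX2 hXn
      have hX0 : (0:ℝ) < X n := by linarith
      have setEq : (Finset.Icc 1 n).filter (fun k => b n ≤ w n k) = Finset.Icc 1 ⌊X n⌋₊ := by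
        ext k
        simp only [Finset.mem_filter, Finset.mem_Icc]
        constructor
        · rintro ⟨⟨h1, h2⟩, h3⟩
          exact ⟨h1, Nat.le_floor ((hle2 n k hn h1).mp h3)⟩
        · rintro ⟨h1, h2⟩
          have hkX : (k:ℝ) ≤ X n :=
            le_trans (by exact_mod_cast Nat.cast_le.mpr h2 : (k:ℝ) ≤ (⌊X n⌋₊:ℝ))
              (Nat.floor_le hX0.le)
          refine ⟨⟨h1, ?_⟩, (hle2 n k hn h1).mpr hkX⟩
          exact_mod_cast hkX.trans (by linarith : X n ≤ (n:ℝ))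
      rw [setEq, Nat.card_Icc]
      simp
    have hfloorT : Tendsto (fun n : ℕ => (⌊X n⌋₊:ℝ) / X n) atTop (𝓝 1) := by
      have hlow : Tendsto (fun n : ℕ => 1 - (X n)⁻¹) atTop (𝓝 1) := by
        simpa using tendsto_const_nhds.sub T5.inv_tendsto_atTop
      apply tendsto_of_tendsto_of_tendsto_of_le_of_le' hlow tendsto_const_nhds
      · filter_upwards [EvX2] with n hX2
        have hX0 : (0:ℝ) < X n := by linarith
        rw [le_div_iff₀ hX0]
        have he : (1 - (X n)⁻¹) * X n = X n - 1 := by field_simp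
        rw [he]
        exact (Nat.sub_one_lt_floor (X n)).le
      · filter_upwards [EvX2] with n hX2
        have hX0 : (0:ℝ) < X n := by linarith
        rw [div_le_one hX0]
        exact Nat.floor_le hX0.le
    apply Tendsto.congr' _ hfloorT
    filter_upwards [cardEq] with n hc
    rw [← hc]
  -- part (ii) machinery
  have Tm2 : Tendsto (fun n : ℕ => (⌈X n⌉₊ - 1 : ℕ)) atTop atTop := by
    rw [← tendsto_natCast_atTop_iff (R := ℝ)]
    apply tendsto_atTop_mono' atTop _ (tendsto_atTop_add_const_right atTop (-1) T5)
    filter_upwards [EvX2] with n hX2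
    have h1 : 1 ≤ ⌈X n⌉₊ := Nat.ceil_pos.mpr (by linarith)
    have hcast : ((⌈X n⌉₊ - 1 : ℕ) : ℝ) = (⌈X n⌉₊ : ℝ) - 1 := by
      rw [Nat.cast_sub h1, Nat.cast_one]
    simp only [hcast]
    have := Nat.le_ceil (X n)
    linarith
  have Tratio2 : Tendsto (fun n : ℕ => ((⌈X n⌉₊ - 1 : ℕ) : ℝ) / X n) atTop (𝓝 1) := by
    have hlow : Tendsto (fun n : ℕ => 1 - (X n)⁻¹) atTop (𝓝 1) := by
      simpa using tendsto_const_nhds.sub T5.inv_tendsto_atTop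
    apply tendsto_of_tendsto_of_tendsto_of_le_of_le' hlow tendsto_const_nhds
    · filter_upwards [EvX2] with n hX2
      have hX0 : (0:ℝ) < X n := by linarith
      have h1 : 1 ≤ ⌈X n⌉₊ := Nat.ceil_pos.mpr (by linarith)
      have hcast : ((⌈X n⌉₊ - 1 : ℕ) : ℝ) = (⌈X n⌉₊ : ℝ) - 1 := by
        rw [Nat.cast_sub h1, Nat.cast_one]
      rw [le_div_iff₀ hX0, hcast]
      have he : (1 - (X n)⁻¹) * X n = X n - 1 := by field_simp
      rw [he]
      have := Nat.le_ceil (X n)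
      linarith
    · filter_upwards [EvX2] with n hX2
      have hX0 : (0:ℝ) < X n := by linarith
      have h1 : 1 ≤ ⌈X n⌉₊ := Nat.ceil_pos.mpr (by linarith)
      have hcast : ((⌈X n⌉₊ - 1 : ℕ) : ℝ) = (⌈X n⌉₊ : ℝ) - 1 := by
        rw [Nat.cast_sub h1, Nat.cast_one]
      rw [div_le_one hX0, hcast]
      have := Nat.ceil_lt_add_one hX0.le
      linarith
  have Tpow2 : Tendsto (fun n : ℕ => (((⌈X n⌉₊ - 1 : ℕ) : ℝ) / X n)^(1-α)) atTop (𝓝 1) := by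
    have := Tratio2.rpow_const (p := 1-α) (Or.inl one_ne_zero)
    simpa using this
  have TS2 := TS.comp Tm2
  have main2 : Tendsto (fun n : ℕ =>
      ((1-α) * ((∑ k ∈ Finset.Icc 1 (⌈X n⌉₊ - 1), (k:ℝ)^(-α)) / ((⌈X n⌉₊ - 1 : ℕ):ℝ)^(1-α)))
        * (((⌈X n⌉₊ - 1 : ℕ):ℝ)/X n)^(1-α)) atTop (𝓝 1) := by
    have h := (TS2.const_mul (1-α)).mul Tpow2
    have he : (1-α) * (1/(1-α)) * 1 = 1 := by field_simp
    rw [he] at h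
    exact h
  have partII : Tendsto (fun n : ℕ =>
      (∑ k ∈ (Finset.Icc 1 n).filter (fun k => b n < w n k), w n k) /
        (cF ^ (τ - 1) * (n : ℝ) / (1 - α) * (w n i / (a * L n)) ^ (τ - 2)))
      atTop (𝓝 1) := by
    apply Tendsto.congr' _ main2
    filter_upwards [eventually_ge_atTop 1, EvX2, EvXn] with n hn hX2 hXn
    have hn0 : (0:ℝ) < n := by exact_mod_cast hn
    have hX0 : (0:ℝ) < X n := by linarith
    have hceil1 : 1 ≤ ⌈X n⌉₊ := Nat.ceil_pos.mpr (by linarith)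
    have hceil2 : 2 ≤ ⌈X n⌉₊ := Nat.lt_ceil.mpr (by exact_mod_cast (by linarith : (1:ℝ) < X n))
    have hm1 : 1 ≤ ⌈X n⌉₊ - 1 := by omega
    have hmcast : ((⌈X n⌉₊ - 1 : ℕ):ℝ) = (⌈X n⌉₊ : ℝ) - 1 := by
      rw [Nat.cast_sub hceil1, Nat.cast_one]
    have hmX : ((⌈X n⌉₊ - 1 : ℕ):ℝ) ≤ X n := by
      rw [hmcast]; linarith [Nat.ceil_lt_add_one hX0.le]
    have hmn : (⌈X n⌉₊ - 1 : ℕ) ≤ n := by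
      have h2 : ((⌈X n⌉₊ - 1 : ℕ):ℝ) < (n:ℝ) := lt_of_le_of_lt hmX (by linarith)
      exact_mod_cast h2.le
    have hm0 : (0:ℝ) < ((⌈X n⌉₊ - 1 : ℕ):ℝ) := by exact_mod_cast hm1
    have setEq2 : (Finset.Icc 1 n).filter (fun k => b n < w n k)
        = Finset.Icc 1 (⌈X n⌉₊ - 1) := by
      ext k
      simp only [Finset.mem_filter, Finset.mem_Icc]
      constructor
      · rintro ⟨⟨h1, h2⟩, h3⟩
        have hkX : (k:ℝ) < X n := (hlt2 n k hn h1).mp h3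
        have : k < ⌈X n⌉₊ := Nat.lt_ceil.mpr hkX
        exact ⟨h1, by omega⟩
      · rintro ⟨h1, h2⟩
        have hk' : k < ⌈X n⌉₊ := by omega
        have hkX : (k:ℝ) < X n := Nat.lt_ceil.mp hk'
        refine ⟨⟨h1, ?_⟩, (hlt2 n k hn h1).mpr hkX⟩
        have : (k:ℝ) < (n:ℝ) := by linarith
        exact_mod_cast this.le
    have sumEq2 : (∑ k ∈ Finset.Icc 1 (⌈X n⌉₊ - 1), w n k)
        = cF * (n:ℝ)^α * ∑ k ∈ Finset.Icc 1 (⌈X n⌉₊ - 1), (k:ℝ)^(-α) := by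
      rw [Finset.mul_sum]
      exact Finset.sum_congr rfl fun k hk => hwk n k hn (Finset.mem_Icc.mp hk).1
    have ht : 0 < cF * w n i / (a * L n) :=
      div_pos (mul_pos hcF (hwpos n i hn hi)) (mul_pos ha (hLpos n hn))
    have hXn' : X n = (n:ℝ) * (cF * w n i / (a * L n))^(τ-1) := by simp only [hXdef]
    have e1 : (X n)^(1-α) = (n:ℝ)^(1-α) * (cF * w n i / (a * L n))^(τ-2) := by
      rw [hXn', Real.mul_rpow hn0.le (Real.rpow_nonneg ht.le _), ← Real.rpow_mul ht.le]
      congr 2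
      linear_combination -hατ
    have e2 : w n i / (a * L n) = (cF * w n i / (a * L n)) / cF := by
      rw [eq_div_iff hcF.ne']
      ring
    have e3 : (w n i / (a * L n))^(τ-2) = (cF * w n i / (a * L n))^(τ-2) / cF^(τ-2) := by
      rw [e2, Real.div_rpow ht.le hcF.le]
    have e4 : cF^(τ-1) = cF * cF^(τ-2) := by
      rw [show τ-1 = 1+(τ-2) by ring, Real.rpow_add hcF, Real.rpow_one]
    have e5 : (n:ℝ)^α * (n:ℝ)^(1-α) = (n:ℝ) := by
      rw [← Real.rpow_add hn0, show α + (1-α) = 1 by ring, Real.rpow_one]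
    have denEq2 : cF ^ (τ - 1) * (n : ℝ) / (1 - α) * (w n i / (a * L n)) ^ (τ - 2)
        = cF * (n:ℝ)^α * (X n)^(1-α) / (1-α) := by
      rw [e3, e4, e1]
      have hc2 : (0:ℝ) < cF^(τ-2) := Real.rpow_pos_of_pos hcF _
      set T' := (cF * w n i / (a * L n))^(τ-2) with hT'
      set A' := (n:ℝ)^α with hA'
      set B' := (n:ℝ)^(1-α) with hB'
      rw [← e5]
      have key : ∀ (cf c2 A B T e : ℝ), c2 ≠ 0 → e ≠ 0 →
          cf * c2 * (A*B) / e * (T/c2) = cf * A * (B*T) / e := by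
        intro cf c2 A B T e h1 h2; field_simp
      exact key cF (cF^(τ-2)) A' B' T' (1-α) hc2.ne' h1α.ne'
    rw [setEq2, sumEq2, denEq2, Real.div_rpow hm0.le hX0.le]
    have hpm : (0:ℝ) < ((⌈X n⌉₊ - 1 : ℕ):ℝ)^(1-α) := Real.rpow_pos_of_pos hm0 _
    have hpX : (0:ℝ) < (X n)^(1-α) := Real.rpow_pos_of_pos hX0 _
    have hpn : (0:ℝ) < (n:ℝ)^α := Real.rpow_pos_of_pos hn0 _
    set S' := ∑ k ∈ Finset.Icc 1 (⌈X n⌉₊ - 1), (k:ℝ)^(-α) with hS'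
    set M' := ((⌈X n⌉₊ - 1 : ℕ):ℝ)^(1-α) with hM'
    set Y' := (X n)^(1-α) with hY'
    set A' := (n:ℝ)^α with hA'
    have key : ∀ (s m' y' a' c : ℝ), m' ≠ 0 → y' ≠ 0 → a' ≠ 0 → c ≠ 0 →
        c * (s/m') * (m'/y') = a' * s / (a' * y' / c) := by
      intro s m' y' a' c h1 h2 h3 h4; field_simp
    exact key S' M' Y' (cF * A') (1-α) hpm.ne' hpX.ne' (by positivity) h1α.ne'

  -- part (iii)
  have Hdiv : ∀ (u v e : ℝ), 0 < u → 0 < v → (u/v)^e = u^e * v^(-e) := by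
    intro u v e hu hv
    rw [Real.div_rpow hu.le hv.le, Real.rpow_neg hv.le, div_eq_mul_inv]
  have Tratio3 : Tendsto (fun n : ℕ => ((⌈X n⌉₊:ℝ)) / X n) atTop (𝓝 1) := by
    have hup : Tendsto (fun n : ℕ => 1 + (X n)⁻¹) atTop (𝓝 1) := by
      simpa using (tendsto_const_nhds (x := (1:ℝ)) (f := atTop (α := ℕ))).add T5.inv_tendsto_atTop
    apply tendsto_of_tendsto_of_tendsto_of_le_of_le' tendsto_const_nhds hup
    · filter_upwards [EvX2] with n hX2
      have hX0 : (0:ℝ) < X n := by linarith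
      rw [le_div_iff₀ hX0, one_mul]
      exact Nat.le_ceil (X n)
    · filter_upwards [EvX2] with n hX2
      have hX0 : (0:ℝ) < X n := by linarith
      rw [div_le_iff₀ hX0]
      have h2 := Nat.ceil_lt_add_one hX0.le
      have he : (1 + (X n)⁻¹) * X n = X n + 1 := by field_simp
      rw [he]
      linarith
  have TpowA : Tendsto (fun n : ℕ => ((⌈X n⌉₊:ℝ)/X n)^(1-2*α)) atTop (𝓝 1) := by
    have := Tratio3.rpow_const (p := 1-2*α) (Or.inl one_ne_zero)
    simpa using this
  have TpowB : Tendsto (fun n : ℕ => ((⌈X n⌉₊:ℝ)/X n)^(-(2*α))) atTop (𝓝 1) := by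
    have := Tratio3.rpow_const (p := -(2*α)) (Or.inl one_ne_zero)
    simpa using this
  have TnXpow : Tendsto (fun n : ℕ => ((n:ℝ)/X n)^(1-2*α)) atTop (𝓝 0) := by
    have h1 : Tendsto (fun n : ℕ => (((n:ℝ)/X n)^(2*α-1))⁻¹) atTop (𝓝 0) :=
      ((tendsto_rpow_atTop h2α1).comp TnX).inv_tendsto_atTop
    apply h1.congr'
    filter_upwards [eventually_ge_atTop 1, EvX2] with n hn hX2
    have hn0 : (0:ℝ) < n := by exact_mod_cast hn
    have hX0 : (0:ℝ) < X n := by linarith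
    have hq : (0:ℝ) < (n:ℝ)/X n := div_pos hn0 hX0
    rw [show (1-2*α) = -(2*α-1) by ring, Real.rpow_neg hq.le]
  have lowT : Tendsto (fun n : ℕ =>
      ((⌈X n⌉₊:ℝ)/X n)^(1-2*α) - ((n:ℝ)/X n)^(1-2*α)) atTop (𝓝 1) := by
    simpa using TpowA.sub TnXpow
  have upT : Tendsto (fun n : ℕ =>
      (2*α-1) * ((⌈X n⌉₊:ℝ)/X n)^(-(2*α)) * (X n)⁻¹ + ((⌈X n⌉₊:ℝ)/X n)^(1-2*α))
      atTop (𝓝 1) := by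
    have h := ((TpowB.const_mul (2*α-1)).mul T5.inv_tendsto_atTop).add TpowA
    have he : (2*α-1) * 1 * 0 + 1 = (1:ℝ) := by ring
    rw [he] at h
    exact h
  have Hsq : ∀ (y e : ℝ), 0 < y → (y^e)^2 = y^(2*e) := by
    intro y e hy
    rw [sq, ← Real.rpow_add hy]; congr 1; ring
  have hne1 : -(2*α) ≠ -1 := by intro h; linarith
  have partIII : Tendsto (fun n : ℕ =>
      (∑ k ∈ (Finset.Icc 1 n).filter (fun k => w n k ≤ b n), (w n k)^2) /
        (cF ^ (τ - 1) * (n:ℝ) / (2*α - 1) * (a * L n / w n i) ^ (3 - τ)))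
      atTop (𝓝 1) := by
    have hGoalEq : ∀ᶠ n : ℕ in atTop,
        (2*α-1) * (∑ k ∈ Finset.Icc ⌈X n⌉₊ n, (k:ℝ)^(-(2*α))) * (X n)^(2*α-1)
        = (∑ k ∈ (Finset.Icc 1 n).filter (fun k => w n k ≤ b n), (w n k)^2) /
            (cF ^ (τ - 1) * (n:ℝ) / (2*α - 1) * (a * L n / w n i) ^ (3 - τ)) := by
      filter_upwards [eventually_ge_atTop 1, EvX2, EvXn] with n hn hX2 hXn
      have hn0 : (0:ℝ) < n := by exact_mod_cast hn
      have hX0 : (0:ℝ) < X n := by linarith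
      have hm1 : 1 ≤ ⌈X n⌉₊ := Nat.ceil_pos.mpr (by linarith)
      have hmn : ⌈X n⌉₊ ≤ n := by
        rw [Nat.ceil_le]
        linarith
      have setEq3 : (Finset.Icc 1 n).filter (fun k => w n k ≤ b n) = Finset.Icc ⌈X n⌉₊ n := by
        ext k
        simp only [Finset.mem_filter, Finset.mem_Icc]
        constructor
        · rintro ⟨⟨h1, h2⟩, h3⟩
          exact ⟨Nat.ceil_le.mpr ((hle3 n k hn h1).mp h3), h2⟩
        · rintro ⟨h1, h2⟩
          have hk1 : 1 ≤ k := le_trans hm1 h1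
          exact ⟨⟨hk1, h2⟩, (hle3 n k hn hk1).mpr (Nat.ceil_le.mp h1)⟩
      have sumEq3 : (∑ k ∈ Finset.Icc ⌈X n⌉₊ n, (w n k)^2)
          = cF^2 * (n:ℝ)^(2*α) * ∑ k ∈ Finset.Icc ⌈X n⌉₊ n, (k:ℝ)^(-(2*α)) := by
        rw [Finset.mul_sum]
        apply Finset.sum_congr rfl
        intro k hk
        have hk1 : 1 ≤ k := le_trans hm1 (Finset.mem_Icc.mp hk).1
        have hk0 : (0:ℝ) < k := by exact_mod_cast hk1
        rw [hwk n k hn hk1, mul_pow, mul_pow, Hsq (n:ℝ) α hn0, Hsq (k:ℝ) (-α) hk0,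
          show 2*(-α) = -(2*α) by ring]
      have hb0 : 0 < a * L n / w n i := div_pos (mul_pos ha (hLpos n hn)) (hwpos n i hn hi)
      have hcb0 : 0 < cF / (a * L n / w n i) := div_pos hcF hb0
      have hXn' : X n = (n:ℝ) * (cF / (a * L n / w n i))^(τ-1) := by
        simp only [hXdef]
        rw [div_div_eq_mul_div]
      have e1 : (X n)^(1-2*α) = (n:ℝ)^(1-2*α) * (cF / (a * L n / w n i))^(τ-3) := by
        rw [hXn', Real.mul_rpow hn0.le (Real.rpow_nonneg hcb0.le _), ← Real.rpow_mul hcb0.le]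
        congr 2
        linear_combination (-2) * hατ
      have e2 : (cF / (a * L n / w n i))^(τ-3) = cF^(τ-3) * (a * L n / w n i)^(3-τ) := by
        rw [Real.div_rpow hcF.le hb0.le, div_eq_mul_inv, ← Real.rpow_neg hb0.le,
          show -(τ-3) = 3-τ by ring]
      have e3 : cF^(τ-1) = cF^2 * cF^(τ-3) := by
        rw [show τ-1 = 1+1+(τ-3) by ring, Real.rpow_add hcF, Real.rpow_add hcF, Real.rpow_one, sq]
      have e4 : (n:ℝ)^(2*α) * (n:ℝ)^(1-2*α) = (n:ℝ) := by
        rw [← Real.rpow_add hn0, show 2*α + (1-2*α) = 1 by ring, Real.rpow_one]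
      have e5 : (X n)^(1-2*α) = ((X n)^(2*α-1))⁻¹ := by
        rw [show (1-2*α) = -(2*α-1) by ring, Real.rpow_neg hX0.le]
      have denEq3 : cF ^ (τ - 1) * (n:ℝ) / (2*α - 1) * (a * L n / w n i) ^ (3 - τ)
          = cF^2 * (n:ℝ)^(2*α) * (X n)^(1-2*α) / (2*α-1) := by
        rw [e3, e1, e2]
        set T' := (a * L n / w n i)^(3-τ) with hT'
        set C3 := cF^(τ-3) with hC3
        set A' := (n:ℝ)^(2*α) with hA'
        set B' := (n:ℝ)^(1-2*α) with hB'
        rw [← e4]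
        have key : ∀ (c2 c3 A B T e : ℝ),
            c2 * c3 * (A*B) / e * T = c2 * A * (B * (c3 * T)) / e := by
          intro c2 c3 A B T e; ring
        exact key (cF^2) C3 A' B' T' (2*α-1)
      rw [setEq3, sumEq3, denEq3, e5]
      have hpX : (0:ℝ) < (X n)^(2*α-1) := Real.rpow_pos_of_pos hX0 _
      have hpA : (0:ℝ) < cF^2 * (n:ℝ)^(2*α) := by positivity
      set T' := ∑ k ∈ Finset.Icc ⌈X n⌉₊ n, (k:ℝ)^(-(2*α)) with hT'
      set A' := cF^2 * (n:ℝ)^(2*α) with hA'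
      set Y' := (X n)^(2*α-1) with hY'
      have key : ∀ (c A T y : ℝ), A ≠ 0 → y ≠ 0 → c ≠ 0 →
          c * T * y = A * T / (A * y⁻¹ / c) := by
        intro c A T y h1 h2 h3; field_simp
      exact key (2*α-1) A' T' Y' hpA.ne' hpX.ne' h2α1.ne'
    have hMid : Tendsto (fun n : ℕ =>
        (2*α-1) * (∑ k ∈ Finset.Icc ⌈X n⌉₊ n, (k:ℝ)^(-(2*α))) * (X n)^(2*α-1))
        atTop (𝓝 1) := by
      apply tendsto_of_tendsto_of_tendsto_of_le_of_le' lowT upT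
      · filter_upwards [eventually_ge_atTop 1, EvX2, EvXn] with n hn hX2 hXn
        have hn0 : (0:ℝ) < n := by exact_mod_cast hn
        have hX0 : (0:ℝ) < X n := by linarith
        have hm1 : 1 ≤ ⌈X n⌉₊ := Nat.ceil_pos.mpr (by linarith)
        have hm0 : (0:ℝ) < (⌈X n⌉₊:ℝ) := by exact_mod_cast hm1
        have hmn : ⌈X n⌉₊ ≤ n := by rw [Nat.ceil_le]; linarith
        have hmncast : ((⌈X n⌉₊:ℕ):ℝ) ≤ (n:ℝ) := by exact_mod_cast hmn
        have hXp : (0:ℝ) < (X n)^(2*α-1) := Real.rpow_pos_of_pos hX0 _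
        have hint : ∫ x in ((⌈X n⌉₊:ℕ):ℝ)..(n:ℝ), x^(-(2*α))
            = ((⌈X n⌉₊:ℝ)^(1-2*α) - (n:ℝ)^(1-2*α))/(2*α-1) := by
          rw [integral_eval hne1 hm0 hmncast, show -(2*α)+1 = 1-2*α by ring,
            div_eq_div_iff (by linarith : (1:ℝ)-2*α ≠ 0) h2α1.ne']
          ring
        have hTlow := le_sum_rpow (by linarith : -(2*α) < 0) hm1 hmn
        rw [hint] at hTlow
        have h1 : (⌈X n⌉₊:ℝ)^(1-2*α) - (n:ℝ)^(1-2*α)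
            ≤ (2*α-1) * ∑ k ∈ Finset.Icc ⌈X n⌉₊ n, (k:ℝ)^(-(2*α)) := by
          rw [div_le_iff₀ h2α1] at hTlow
          linarith
        rw [Hdiv (⌈X n⌉₊:ℝ) (X n) (1-2*α) hm0 hX0, Hdiv (n:ℝ) (X n) (1-2*α) hn0 hX0,
          show -(1-2*α) = 2*α-1 by ring]
        calc (⌈X n⌉₊:ℝ)^(1-2*α) * (X n)^(2*α-1) - (n:ℝ)^(1-2*α) * (X n)^(2*α-1)
            = ((⌈X n⌉₊:ℝ)^(1-2*α) - (n:ℝ)^(1-2*α)) * (X n)^(2*α-1) := by ring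
          _ ≤ ((2*α-1) * ∑ k ∈ Finset.Icc ⌈X n⌉₊ n, (k:ℝ)^(-(2*α))) * (X n)^(2*α-1) :=
              mul_le_mul_of_nonneg_right h1 hXp.le
          _ = (2*α-1) * (∑ k ∈ Finset.Icc ⌈X n⌉₊ n, (k:ℝ)^(-(2*α))) * (X n)^(2*α-1) := by
              ring
      · filter_upwards [eventually_ge_atTop 1, EvX2, EvXn] with n hn hX2 hXn
        have hn0 : (0:ℝ) < n := by exact_mod_cast hn
        have hX0 : (0:ℝ) < X n := by linarith
        have hm1 : 1 ≤ ⌈X n⌉₊ := Nat.ceil_pos.mpr (by linarith)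
        have hm0 : (0:ℝ) < (⌈X n⌉₊:ℝ) := by exact_mod_cast hm1
        have hmn : ⌈X n⌉₊ ≤ n := by rw [Nat.ceil_le]; linarith
        have hmncast : ((⌈X n⌉₊:ℕ):ℝ) ≤ (n:ℝ) := by exact_mod_cast hmn
        have hXp : (0:ℝ) < (X n)^(2*α-1) := Real.rpow_pos_of_pos hX0 _
        have hint : ∫ x in ((⌈X n⌉₊:ℕ):ℝ)..(n:ℝ), x^(-(2*α))
            = ((⌈X n⌉₊:ℝ)^(1-2*α) - (n:ℝ)^(1-2*α))/(2*α-1) := by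
          rw [integral_eval hne1 hm0 hmncast, show -(2*α)+1 = 1-2*α by ring,
            div_eq_div_iff (by linarith : (1:ℝ)-2*α ≠ 0) h2α1.ne']
          ring
        have hThigh := sum_rpow_le (by linarith : -(2*α) < 0) hm1 hmn
        rw [hint] at hThigh
        have hnpos : (0:ℝ) < (n:ℝ)^(1-2*α) := Real.rpow_pos_of_pos hn0 _
        have h1 : (2*α-1) * (∑ k ∈ Finset.Icc ⌈X n⌉₊ n, (k:ℝ)^(-(2*α)))
            ≤ (2*α-1) * (⌈X n⌉₊:ℝ)^(-(2*α)) + (⌈X n⌉₊:ℝ)^(1-2*α) := by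
          have h2 : (∑ k ∈ Finset.Icc ⌈X n⌉₊ n, (k:ℝ)^(-(2*α)))
              ≤ (⌈X n⌉₊:ℝ)^(-(2*α)) + (⌈X n⌉₊:ℝ)^(1-2*α)/(2*α-1) := by
            have h3 : ((⌈X n⌉₊:ℝ)^(1-2*α) - (n:ℝ)^(1-2*α))/(2*α-1)
                ≤ (⌈X n⌉₊:ℝ)^(1-2*α)/(2*α-1) := by
              exact (div_le_div_iff_of_pos_right h2α1).mpr (by linarith)
            linarith
          have h4 := mul_le_mul_of_nonneg_left h2 h2α1.le
          have h5 : (2*α-1) * ((⌈X n⌉₊:ℝ)^(1-2*α)/(2*α-1)) = (⌈X n⌉₊:ℝ)^(1-2*α) := by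
            field_simp
          calc (2*α-1) * (∑ k ∈ Finset.Icc ⌈X n⌉₊ n, (k:ℝ)^(-(2*α)))
              ≤ (2*α-1) * ((⌈X n⌉₊:ℝ)^(-(2*α)) + (⌈X n⌉₊:ℝ)^(1-2*α)/(2*α-1)) := h4
            _ = (2*α-1) * (⌈X n⌉₊:ℝ)^(-(2*α))
                + (2*α-1) * ((⌈X n⌉₊:ℝ)^(1-2*α)/(2*α-1)) := by ring
            _ = (2*α-1) * (⌈X n⌉₊:ℝ)^(-(2*α)) + (⌈X n⌉₊:ℝ)^(1-2*α) := by rw [h5]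
        have hXX : (X n)^(2*α) * (X n)⁻¹ = (X n)^(2*α-1) := by
          rw [show (2*α-1) = 2*α + (-1) by ring, Real.rpow_add hX0, Real.rpow_neg_one]
        rw [Hdiv (⌈X n⌉₊:ℝ) (X n) (-(2*α)) hm0 hX0, Hdiv (⌈X n⌉₊:ℝ) (X n) (1-2*α) hm0 hX0,
          show -(-(2*α)) = 2*α by ring, show -(1-2*α) = 2*α-1 by ring]
        calc (2*α-1) * (∑ k ∈ Finset.Icc ⌈X n⌉₊ n, (k:ℝ)^(-(2*α))) * (X n)^(2*α-1)
            ≤ ((2*α-1) * (⌈X n⌉₊:ℝ)^(-(2*α)) + (⌈X n⌉₊:ℝ)^(1-2*α)) * (X n)^(2*α-1) :=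
              mul_le_mul_of_nonneg_right h1 hXp.le
          _ = (2*α-1) * ((⌈X n⌉₊:ℝ)^(-(2*α)) * ((X n)^(2*α) * (X n)⁻¹))
              + (⌈X n⌉₊:ℝ)^(1-2*α) * (X n)^(2*α-1) := by rw [hXX]; ring
          _ = (2*α-1) * ((⌈X n⌉₊:ℝ)^(-(2*α)) * (X n)^(2*α)) * (X n)⁻¹
              + (⌈X n⌉₊:ℝ)^(1-2*α) * (X n)^(2*α-1) := by ring
    exact hMid.congr' hGoalEq
  exact ⟨partI, partII, partIII⟩
end
end

section
/- Let α ∈ (1/2, 1) and b ∈ (1/2, α). There exists a constant C = C(α, b) < ∞ such that for every positive integer i: ∑_{j=1}^∞ (min(i,j))^{−(1−b)} (max(i,j))^{−b} j^{−α} ≤ C i^{−b}. -/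
open scoped ENNReal

/-- For `α ∈ (1/2, 1)` and `b ∈ (1/2, α)` there is a constant
`C < ∞` such that for every positive integer `i`:
`∑_{j=1}^∞ (min i j)^{−(1−b)} (max i j)^{−b} j^{−α} ≤ C i^{−b}`. -/
theorem stmt10 (α b : ℝ) (hα : α ∈ Set.Ioo (1 / 2 : ℝ) 1) (hb : b ∈ Set.Ioo (1 / 2 : ℝ) α) :
    ∃ C : ℝ, 0 < C ∧ ∀ i : ℕ, 1 ≤ i →
      (∑' j : ℕ+, ENNReal.ofReal
          ((min (i : ℝ) ((j : ℕ) : ℝ)) ^ (-(1 - b)) * (max (i : ℝ) ((j : ℕ) : ℝ)) ^ (-b) *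
            ((j : ℕ) : ℝ) ^ (-α)))
        ≤ ENNReal.ofReal (C * (i : ℝ) ^ (-b)) := by
  obtain ⟨hα1, hα2⟩ := hα
  obtain ⟨hb1, hb2⟩ := hb
  set s : ℝ := 1 - b + α with hs
  have hs1 : 1 < s := by simp only [hs]; linarith
  have hsum : Summable (fun n : ℕ+ => ((n : ℕ) : ℝ) ^ (-s)) := by
    have h : Summable (fun n : ℕ => (n : ℝ) ^ (-s)) :=
      Real.summable_nat_rpow.mpr (by linarith)
    exact h.comp_injective (fun a c hac => PNat.coe_injective hac)
  set C : ℝ := ∑' n : ℕ+, ((n : ℕ) : ℝ) ^ (-s) with hC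
  have hCpos : 0 < C :=
    Summable.tsum_pos hsum (fun n => Real.rpow_nonneg (by positivity) _) 1 (by norm_num)
  refine ⟨C, hCpos, fun i hi => ?_⟩
  have hipos : (0 : ℝ) < i := by exact_mod_cast Nat.lt_of_lt_of_le Nat.zero_lt_one hi
  have key : ∀ j : ℕ+,
      (min (i : ℝ) ((j : ℕ) : ℝ)) ^ (-(1 - b)) * (max (i : ℝ) ((j : ℕ) : ℝ)) ^ (-b) *
        ((j : ℕ) : ℝ) ^ (-α) ≤ (i : ℝ) ^ (-b) * ((j : ℕ) : ℝ) ^ (-s) := by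
    intro j
    have hjpos : (0 : ℝ) < ((j : ℕ) : ℝ) := by exact_mod_cast j.pos
    set jr : ℝ := ((j : ℕ) : ℝ)
    rcases le_total jr (i : ℝ) with h | h
    · rw [min_eq_right h, max_eq_left h,
        show -s = (-(1 - b)) + (-α) by simp only [hs]; ring, Real.rpow_add hjpos]
      apply le_of_eq; ring
    · rw [min_eq_left h, max_eq_right h]
      have e1 : (i : ℝ) ^ (-(1 - b)) = (i : ℝ) ^ (-b) * (i : ℝ) ^ (2 * b - 1) := by
        rw [← Real.rpow_add hipos]; ring_nf
      have e2 : jr ^ (-b) * jr ^ (-α) = jr ^ (-s) * jr ^ (-(2 * b - 1)) := by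
        rw [← Real.rpow_add hjpos, ← Real.rpow_add hjpos, hs]; ring_nf
      have h3 : (i : ℝ) ^ (2 * b - 1) * jr ^ (-(2 * b - 1)) ≤ 1 := by
        rw [Real.rpow_neg hjpos.le, ← div_eq_mul_inv, div_le_one (by positivity)]
        exact Real.rpow_le_rpow hipos.le h (by linarith)
      calc (i : ℝ) ^ (-(1 - b)) * jr ^ (-b) * jr ^ (-α)
          = ((i : ℝ) ^ (-b) * jr ^ (-s)) * ((i : ℝ) ^ (2 * b - 1) * jr ^ (-(2 * b - 1))) := by
            rw [mul_assoc, e1, e2]; ring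
        _ ≤ ((i : ℝ) ^ (-b) * jr ^ (-s)) * 1 :=
            mul_le_mul_of_nonneg_left h3 (by positivity)
        _ = (i : ℝ) ^ (-b) * jr ^ (-s) := mul_one _
  calc (∑' j : ℕ+, ENNReal.ofReal
          ((min (i : ℝ) ((j : ℕ) : ℝ)) ^ (-(1 - b)) * (max (i : ℝ) ((j : ℕ) : ℝ)) ^ (-b) *
            ((j : ℕ) : ℝ) ^ (-α)))
      ≤ ∑' j : ℕ+, ENNReal.ofReal ((i : ℝ) ^ (-b) * ((j : ℕ) : ℝ) ^ (-s)) :=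
        ENNReal.tsum_le_tsum fun j => ENNReal.ofReal_le_ofReal (key j)
    _ = ENNReal.ofReal (∑' j : ℕ+, (i : ℝ) ^ (-b) * ((j : ℕ) : ℝ) ^ (-s)) :=
        (ENNReal.ofReal_tsum_of_nonneg (fun j => by positivity) (hsum.mul_left _)).symm
    _ = ENNReal.ofReal (C * (i : ℝ) ^ (-b)) := by rw [tsum_mul_left, mul_comm]
end
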